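/- Let P be a prime graph with n = |V(P)| ≥ 4 and let M1, …, Mn be non-empty graphs. Then P⟨M1, …, Mn⟩ is provable in GS if and only if there is some i ∈ {1, …, n} such that Mi is provable in GS and P⟨M1, …, M_{i-1}, ∅, M_{i+1}, …, Mn⟩ is provable in GS. -/

import Mathlib

namespace GSP

/-- Atoms: a propositional variable (coded by a natural number) with a polarity. -/
abbrev Atom := ℕ × Bool

/-- The dual atom. -/
def dualAtom (a : Atom) : Atom := (a.1, !a.2)

/-- A finite, simple, undirected graph whose vertices are labelled by atoms. -/
structure LGraph where
  V : Type
  [fintype : Fintype V]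
  adj : V → V → Prop
  symm : ∀ {v w : V}, adj v w → adj w v
  irrefl : ∀ v : V, ¬ adj v v
  label : V → Atom

attribute [instance] LGraph.fintype

namespace LGraph

/-- An isomorphism of labelled graphs: a vertex bijection preserving labels and
preserving and reflecting edges. -/
structure Iso (G H : LGraph) where
  toEquiv : G.V ≃ H.V
  adj_iff : ∀ v w : G.V, G.adj v w ↔ H.adj (toEquiv v) (toEquiv w)
  label_eq : ∀ v : G.V, H.label (toEquiv v) = G.label v

/-- `G ≅ H` : the graphs `G` and `H` are isomorphic. -/
def iso (G H : LGraph) : Prop := Nonempty (Iso G H)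

/-- The empty graph. -/
def empty : LGraph where
  V := Empty
  adj _ _ := False
  symm h := h.elim
  irrefl v := v.elim
  label v := v.elim

/-- The single-vertex graph labelled by the atom `a`. -/
def single (a : Atom) : LGraph where
  V := Unit
  adj _ _ := False
  symm h := h.elim
  irrefl _ h := h
  label _ := a

def parAdj (G H : LGraph) : G.V ⊕ H.V → G.V ⊕ H.V → Prop
  | .inl a, .inl b => G.adj a b
  | .inr a, .inr b => H.adj a b
  | _, _ => False

/-- The par `G ⅋ H` : disjoint union of `G` and `H`. -/
def par (G H : LGraph) : LGraph where
  V := G.V ⊕ H.V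
  adj := parAdj G H
  symm := by
    rintro (a | a) (b | b) h
    · exact G.symm h
    · exact h.elim
    · exact h.elim
    · exact H.symm h
  irrefl := by
    rintro (a | a) h
    · exact G.irrefl a h
    · exact H.irrefl a h
  label := Sum.elim G.label H.label

def tensorAdj (G H : LGraph) : G.V ⊕ H.V → G.V ⊕ H.V → Prop
  | .inl a, .inl b => G.adj a b
  | .inr a, .inr b => H.adj a b
  | .inl _, .inr _ => True
  | .inr _, .inl _ => True

/-- The tensor `G ⊗ H` : join of `G` and `H` (disjoint union plus all edges in between). -/
def tensor (G H : LGraph) : LGraph where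
  V := G.V ⊕ H.V
  adj := tensorAdj G H
  symm := by
    rintro (a | a) (b | b) h
    · exact G.symm h
    · exact trivial
    · exact trivial
    · exact H.symm h
  irrefl := by
    rintro (a | a) h
    · exact G.irrefl a h
    · exact H.irrefl a h
  label := Sum.elim G.label H.label

/-- The dual graph `Ḡ` : same vertices, complemented edges, dualized labels. -/
def dual (G : LGraph) : LGraph where
  V := G.V
  adj v w := v ≠ w ∧ ¬ G.adj v w
  symm h := ⟨fun e => h.1 e.symm, fun h' => h.2 (G.symm h')⟩
  irrefl _ h := h.1 rfl
  label v := dualAtom (G.label v)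

def plugAdj (C : LGraph) (R : Set C.V) (X : LGraph) : C.V ⊕ X.V → C.V ⊕ X.V → Prop
  | .inl a, .inl b => C.adj a b
  | .inr a, .inr b => X.adj a b
  | .inl a, .inr _ => a ∈ R
  | .inr _, .inl b => b ∈ R

/-- `C[X]_R` : the graph obtained from the context `C[·]_R` by inserting the graph `X`
as a module whose vertices are adjacent exactly to the vertices in `R`. -/
def plug (C : LGraph) (R : Set C.V) (X : LGraph) : LGraph where
  V := C.V ⊕ X.V
  adj := plugAdj C R X
  symm := by
    rintro (a | a) (b | b) h
    · exact C.symm h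
    · exact h
    · exact h
    · exact X.symm h
  irrefl := by
    rintro (a | a) h
    · exact C.irrefl a h
    · exact X.irrefl a h
  label := Sum.elim C.label X.label

def compAdj (G : LGraph) (H : G.V → LGraph) :
    (Σ v : G.V, (H v).V) → (Σ v : G.V, (H v).V) → Prop := fun x y =>
  (∃ (v : G.V) (a b : (H v).V), x = ⟨v, a⟩ ∧ y = ⟨v, b⟩ ∧ (H v).adj a b) ∨
    (x.1 ≠ y.1 ∧ G.adj x.1 y.1)

/-- The composition `G⟨H v₁, …, H vₙ⟩` of the family `H` via the graph `G`:
replace each vertex `v` of `G` by the graph `H v`. -/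
def comp (G : LGraph) (H : G.V → LGraph) : LGraph where
  V := Σ v : G.V, (H v).V
  adj := compAdj G H
  symm := by
    rintro x y (⟨v, a, b, hx, hy, hab⟩ | ⟨hne, hadj⟩)
    · exact Or.inl ⟨v, b, a, hy, hx, (H v).symm hab⟩
    · exact Or.inr ⟨hne.symm, G.symm hadj⟩
  irrefl := by
    rintro ⟨v, a⟩ (⟨w, x, y, hx, hy, hxy⟩ | ⟨hne, _⟩)
    · have h := hx.symm.trans hy
      obtain rfl : x = y := by simpa using h
      exact (H w).irrefl x hxy
    · exact hne rfl
  label x := (H x.1).label x.2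

/-- A module of `G` : a set `M` of vertices such that every vertex outside `M`
is adjacent either to all vertices of `M` or to none of them. -/
def IsModule (G : LGraph) (M : Set G.V) : Prop :=
  ∀ v ∉ M, ∀ x ∈ M, ∀ y ∈ M, (G.adj v x ↔ G.adj v y)

/-- A prime graph: at least 2 vertices and only trivial modules. -/
def Prime (G : LGraph) : Prop :=
  2 ≤ Fintype.card G.V ∧
    ∀ M : Set G.V, G.IsModule M → M = ∅ ∨ (∃ v, M = {v}) ∨ M = Set.univ

/-- `G` is `P₄`-free: no four distinct vertices induce a path on 4 vertices. -/
def P4Free (G : LGraph) : Prop :=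
  ¬ ∃ v₁ v₂ v₃ v₄ : G.V,
      v₁ ≠ v₂ ∧ v₁ ≠ v₃ ∧ v₁ ≠ v₄ ∧ v₂ ≠ v₃ ∧ v₂ ≠ v₄ ∧ v₃ ≠ v₄ ∧
      G.adj v₁ v₂ ∧ G.adj v₂ v₃ ∧ G.adj v₃ v₄ ∧
      ¬ G.adj v₁ v₃ ∧ ¬ G.adj v₁ v₄ ∧ ¬ G.adj v₂ v₄

end LGraph

open LGraph

/-- The `n`-fold tensor `X₁ ⊗ ⋯ ⊗ Xₙ`. -/
def bigTensor : (n : ℕ) → (Fin n → LGraph) → LGraph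
  | 0, _ => LGraph.empty
  | n + 1, F => (F 0).tensor (bigTensor n fun i => F i.succ)

/-- The `n`-fold par `X₁ ⅋ ⋯ ⅋ Xₙ`. -/
def bigPar : (n : ℕ) → (Fin n → LGraph) → LGraph
  | 0, _ => LGraph.empty
  | n + 1, F => (F 0).par (bigPar n fun i => F i.succ)

/-- The inference rules of system GS (premise, conclusion). -/
inductive GSRule : LGraph → LGraph → Prop
  /-- ai↓ : premise `∅`, conclusion `ā ⅋ a`. -/
  | ai (a : Atom) : GSRule LGraph.empty ((single (dualAtom a)).par (single a))
  /-- ss↓ : premise `B[A]_S`, conclusion `B ⅋ A`, for `A ≠ ∅` and `S ≠ ∅`. -/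
  | ss (A B : LGraph) (S : Set B.V) :
      Nonempty A.V → S ≠ ∅ → GSRule (B.plug S A) (B.par A)
  /-- p↓ : premise `(M₁ ⅋ N₁) ⊗ ⋯ ⊗ (Mₙ ⅋ Nₙ)`, conclusion `P̄⟨M₁,…,Mₙ⟩ ⅋ P⟨N₁,…,Nₙ⟩`,
  for `P` prime with `n = |V(P)| ≥ 4` and all `Mᵢ ≠ ∅`. -/
  | p (n : ℕ) (P : LGraph) (e : P.V ≃ Fin n) (M N : Fin n → LGraph) :
      P.Prime → 4 ≤ n → (∀ i, Nonempty (M i).V) →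
      GSRule (bigTensor n fun i => (M i).par (N i))
        ((P.dual.comp fun v => M (e v)).par (P.comp fun v => N (e v)))

/-- The "up" rules ai↑, ss↑, p↑ (premise, conclusion). -/
inductive UpRule : LGraph → LGraph → Prop
  /-- ai↑ : premise `a ⊗ ā`, conclusion `∅`. -/
  | ai (a : Atom) : UpRule ((single a).tensor (single (dualAtom a))) LGraph.empty
  /-- ss↑ : premise `B ⊗ A`, conclusion `B[A]_S`, for `A ≠ ∅` and `S ≠ V(B)`. -/
  | ss (A B : LGraph) (S : Set B.V) :
      Nonempty A.V → S ≠ Set.univ → UpRule (B.tensor A) (B.plug S A)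
  /-- p↑ : premise `P⟨M₁,…,Mₙ⟩ ⊗ P̄⟨N₁,…,Nₙ⟩`, conclusion `(M₁ ⊗ N₁) ⅋ ⋯ ⅋ (Mₙ ⊗ Nₙ)`,
  for `P` prime with `n = |V(P)| ≥ 4` and all `Mᵢ ≠ ∅`. -/
  | p (n : ℕ) (P : LGraph) (e : P.V ≃ Fin n) (M N : Fin n → LGraph) :
      P.Prime → 4 ≤ n → (∀ i, Nonempty (M i).V) →
      UpRule ((P.comp fun v => M (e v)).tensor (P.dual.comp fun v => N (e v)))
        (bigPar n fun i => (M i).tensor (N i))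

/-- The rules of system SGS : the rules of GS together with their duals. -/
def SGSRule (G H : LGraph) : Prop := GSRule G H ∨ UpRule G H

/-- A single inference step in a system: inside some context, replace a module
isomorphic to the premise of a rule by the corresponding conclusion. -/
def Step (Rules : LGraph → LGraph → Prop) (G H : LGraph) : Prop :=
  ∃ (C : LGraph) (R : Set C.V) (p c : LGraph),
    Rules p c ∧ G.iso (C.plug R p) ∧ H.iso (C.plug R c)

/-- A derivation in a system from `G` to `H` : a finite sequence of inference steps
and isomorphisms leading from `G` to `H`. -/
def Deriv (Rules : LGraph → LGraph → Prop) (G H : LGraph) : Prop :=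
  Relation.ReflTransGen (fun X Y => X.iso Y ∨ Step Rules X Y) G H

/-- A graph is provable in a system if there is a derivation from `∅` to it. -/
def Provable (Rules : LGraph → LGraph → Prop) (G : LGraph) : Prop :=
  Deriv Rules LGraph.empty G

/-- Formulas: unit, positive and negative atoms, par and tensor. -/
inductive Formula where
  | unit : Formula
  | pos (a : ℕ) : Formula
  | neg (a : ℕ) : Formula
  | par (φ ψ : Formula) : Formula
  | tens (φ ψ : Formula) : Formula

/-- The graph `[φ]` of a formula `φ`. -/
def Formula.graph : Formula → LGraph
  | .unit => LGraph.empty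
  | .pos a => single (a, true)
  | .neg a => single (a, false)
  | .par φ ψ => φ.graph.par ψ.graph
  | .tens φ ψ => φ.graph.tensor ψ.graph

/-- Structural equivalence of formulas: the smallest congruence making `⅋` and `⊗`
associative and commutative with unit `∘`. -/
inductive Formula.equiv : Formula → Formula → Prop
  | refl (φ) : Formula.equiv φ φ
  | symm {φ ψ} : Formula.equiv φ ψ → Formula.equiv ψ φ
  | trans {φ ψ χ} : Formula.equiv φ ψ → Formula.equiv ψ χ → Formula.equiv φ χ
  | parComm (φ ψ) : Formula.equiv (.par φ ψ) (.par ψ φ)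
  | parAssoc (φ ψ χ) : Formula.equiv (.par φ (.par ψ χ)) (.par (.par φ ψ) χ)
  | parUnit (φ) : Formula.equiv (.par φ .unit) φ
  | tensComm (φ ψ) : Formula.equiv (.tens φ ψ) (.tens ψ φ)
  | tensAssoc (φ ψ χ) : Formula.equiv (.tens φ (.tens ψ χ)) (.tens (.tens φ ψ) χ)
  | tensUnit (φ) : Formula.equiv (.tens φ .unit) φ
  | parCongr {φ φ' ψ ψ'} : Formula.equiv φ φ' → Formula.equiv ψ ψ' →
      Formula.equiv (.par φ ψ) (.par φ' ψ')
  | tensCongr {φ φ' ψ ψ'} : Formula.equiv φ φ' → Formula.equiv ψ ψ' →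
      Formula.equiv (.tens φ ψ) (.tens φ' ψ')

/-- A formula is unit-free if it contains no occurrence of the unit `∘`. -/
def Formula.UnitFree : Formula → Prop
  | .unit => False
  | .pos _ => True
  | .neg _ => True
  | .par φ ψ => φ.UnitFree ∧ ψ.UnitFree
  | .tens φ ψ => φ.UnitFree ∧ ψ.UnitFree

/-- The sequent calculus MLL° (multiplicative linear logic with mix) on multisets
of formulas. -/
inductive MLL : Multiset Formula → Prop
  | ax (a : ℕ) : MLL {Formula.pos a, Formula.neg a}
  | tens {Γ Δ : Multiset Formula} (φ ψ : Formula) :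
      MLL (φ ::ₘ Γ) → MLL (ψ ::ₘ Δ) → MLL (Formula.tens φ ψ ::ₘ (Γ + Δ))
  | par {Γ : Multiset Formula} (φ ψ : Formula) :
      MLL (φ ::ₘ ψ ::ₘ Γ) → MLL (Formula.par φ ψ ::ₘ Γ)
  | mix {Γ Δ : Multiset Formula} : MLL Γ → MLL Δ → MLL (Γ + Δ)


/-! ### Auxiliary development -/

noncomputable section Aux


attribute [local instance] Classical.propDecidable

namespace LGraph

variable {G H K : LGraph}

def Iso.refl (G : LGraph) : Iso G G := ⟨Equiv.refl _, fun _ _ => Iff.rfl, fun _ => rfl⟩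

def Iso.symm (φ : Iso G H) : Iso H G where
  toEquiv := φ.toEquiv.symm
  adj_iff v w := by
    conv_lhs => rw [← φ.toEquiv.apply_symm_apply v, ← φ.toEquiv.apply_symm_apply w,
      ← φ.adj_iff]
  label_eq v := by
    rw [← φ.label_eq (φ.toEquiv.symm v), φ.toEquiv.apply_symm_apply]

def Iso.trans (φ : Iso G H) (ψ : Iso H K) : Iso G K where
  toEquiv := φ.toEquiv.trans ψ.toEquiv
  adj_iff v w := (φ.adj_iff v w).trans (ψ.adj_iff _ _)
  label_eq v := ((ψ.label_eq _).trans (φ.label_eq v))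

def Iso.ofBij (f : G.V → H.V) (hf : Function.Bijective f)
    (hadj : ∀ v w, G.adj v w ↔ H.adj (f v) (f w))
    (hlab : ∀ v, H.label (f v) = G.label v) : Iso G H :=
  ⟨Equiv.ofBijective f hf, hadj, hlab⟩

def isoOfEq {G H : LGraph} (h : G = H) : Iso G H := h ▸ Iso.refl G

def isoOfEmpty (hG : G.V → False) (hH : H.V → False) : Iso G H where
  toEquiv := ⟨fun v => (hG v).elim, fun v => (hH v).elim,
    fun v => (hG v).elim, fun v => (hH v).elim⟩
  adj_iff v _ := (hG v).elim
  label_eq v := (hG v).elim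

lemma iso_refl (G : LGraph) : G.iso G := ⟨Iso.refl G⟩
lemma iso.symm' {G H : LGraph} (h : G.iso H) : H.iso G := h.elim fun φ => ⟨φ.symm⟩
lemma iso.trans' {G H K : LGraph} (h : G.iso H) (h' : H.iso K) : G.iso K :=
  h.elim fun φ => h'.elim fun ψ => ⟨φ.trans ψ⟩

def tensorComm (G H : LGraph) : Iso (G.tensor H) (H.tensor G) where
  toEquiv := Equiv.sumComm _ _
  adj_iff v w := by rcases v with v | v <;> rcases w with w | w <;> erw [Equiv.sumComm_apply] <;> simp [tensor, tensorAdj]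
  label_eq v := by rcases v with v | v <;> rfl

def tensorCongr {G G' H H' : LGraph} (φ : Iso G G') (ψ : Iso H H') :
    Iso (G.tensor H) (G'.tensor H') where
  toEquiv := Equiv.sumCongr φ.toEquiv ψ.toEquiv
  adj_iff v w := by
    rcases v with v | v <;> rcases w with w | w <;>
      erw [Equiv.sumCongr_apply, Equiv.sumCongr_apply] <;> simp [tensor, tensorAdj, φ.adj_iff, ψ.adj_iff]
  label_eq v := by rcases v with v | v <;> erw [Equiv.sumCongr_apply] <;> simp [tensor, φ.label_eq, ψ.label_eq]

def parCongr {G G' H H' : LGraph} (φ : Iso G G') (ψ : Iso H H') :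
    Iso (G.par H) (G'.par H') where
  toEquiv := Equiv.sumCongr φ.toEquiv ψ.toEquiv
  adj_iff v w := by
    rcases v with v | v <;> rcases w with w | w <;>
      erw [Equiv.sumCongr_apply, Equiv.sumCongr_apply] <;> simp [par, parAdj, φ.adj_iff, ψ.adj_iff]
  label_eq v := by rcases v with v | v <;> erw [Equiv.sumCongr_apply] <;> simp [par, φ.label_eq, ψ.label_eq]

/-- congruence in the inserted graph of a plug -/
def plugCongrZ {C : LGraph} (R : Set C.V) {X Y : LGraph} (φ : Iso X Y) :
    Iso (C.plug R X) (C.plug R Y) where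
  toEquiv := Equiv.sumCongr (Equiv.refl _) φ.toEquiv
  adj_iff v w := by
    rcases v with v | v <;> rcases w with w | w <;>
      erw [Equiv.sumCongr_apply, Equiv.sumCongr_apply] <;> simp [plug, plugAdj, φ.adj_iff]
  label_eq v := by rcases v with v | v <;> erw [Equiv.sumCongr_apply] <;> simp [plug, φ.label_eq]

/-- congruence in the context of a plug -/
def plugCongrC {C D : LGraph} {R : Set C.V} {R' : Set D.V} (θ : Iso C D)
    (hR : ∀ a, a ∈ R ↔ θ.toEquiv a ∈ R') (Z : LGraph) :
    Iso (C.plug R Z) (D.plug R' Z) where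
  toEquiv := Equiv.sumCongr θ.toEquiv (Equiv.refl _)
  adj_iff v w := by
    rcases v with v | v <;> rcases w with w | w <;>
      erw [Equiv.sumCongr_apply, Equiv.sumCongr_apply] <;> simp [plug, plugAdj, θ.adj_iff, hR]
  label_eq v := by rcases v with v | v <;> erw [Equiv.sumCongr_apply] <;> simp [plug, θ.label_eq]

def plugEmptyLeft {C : LGraph} (R : Set C.V) (X : LGraph) (hC : C.V → False) :
    Iso (C.plug R X) X where
  toEquiv := ⟨fun v => v.elim (fun a => (hC a).elim) id, fun x => Sum.inr x,
    fun v => by rcases v with v | v; exact (hC v).elim; rfl, fun x => rfl⟩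
  adj_iff v w := by
    rcases v with v | v; exact (hC v).elim
    rcases w with w | w; exact (hC w).elim
    erw [Equiv.coe_fn_mk]; simp [plug, plugAdj]
  label_eq v := by rcases v with v | v; exact (hC v).elim; rfl

def plugEmptyRight {C : LGraph} (R : Set C.V) (X : LGraph) (hX : X.V → False) :
    Iso (C.plug R X) C where
  toEquiv := ⟨fun v => v.elim id (fun x => (hX x).elim), fun a => Sum.inl a,
    fun v => by rcases v with v | v; rfl; exact (hX v).elim, fun a => rfl⟩
  adj_iff v w := by
    rcases v with v | v; swap; exact (hX v).elim
    rcases w with w | w; swap; exact (hX w).elim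
    erw [Equiv.coe_fn_mk]; simp [plug, plugAdj]
  label_eq v := by rcases v with v | v; rfl; exact (hX v).elim

def parEmptyRight {X Y : LGraph} (hY : Y.V → False) : Iso (X.par Y) X where
  toEquiv := ⟨fun v => v.elim id (fun y => (hY y).elim), fun a => Sum.inl a,
    fun v => by rcases v with v | v; rfl; exact (hY v).elim, fun a => rfl⟩
  adj_iff v w := by
    rcases v with v | v; swap; exact (hY v).elim
    rcases w with w | w; swap; exact (hY w).elim
    erw [Equiv.coe_fn_mk]; simp [par, parAdj]
  label_eq v := by rcases v with v | v; rfl; exact (hY v).elim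

def plugUniv (C X : LGraph) : Iso (C.plug Set.univ X) (C.tensor X) where
  toEquiv := Equiv.refl _
  adj_iff v w := by
    rcases v with v | v <;> rcases w with w | w <;>
      erw [Equiv.coe_refl] <;> simp [plug, plugAdj, tensor, tensorAdj, Set.mem_univ]
  label_eq v := by rcases v with v | v <;> rfl

/-- `C[B[·]_{R'}[X]]_S ≅ (C[B]_S)[X]_{S ∪ R'}`. -/
def plugPlug (C : LGraph) (S : Set C.V) (C' : LGraph) (R' : Set C'.V) (X : LGraph) :
    Iso (C.plug S (C'.plug R' X))
      ((C.plug S C').plug {u | Sum.elim (· ∈ S) (· ∈ R') u} X) where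
  toEquiv := (Equiv.sumAssoc _ _ _).symm
  adj_iff v w := by
    rcases v with v | v | v <;> rcases w with w | w | w <;>
      simp only [Equiv.sumAssoc] <;> erw [Equiv.coe_fn_symm_mk] <;> simp [plug, plugAdj, Equiv.sumAssoc]
  label_eq v := by rcases v with v | v | v <;> rfl

end LGraph


namespace LGraph

lemma adj_comm (G : LGraph) (a b : G.V) : G.adj a b ↔ G.adj b a := ⟨G.symm, G.symm⟩

/-- cast of vertices along an equality of graphs -/
def vcast {G₁ G₂ : LGraph} (h : G₁ = G₂) (a : G₁.V) : G₂.V := cast (congrArg LGraph.V h) a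

@[simp] lemma vcast_self {G : LGraph} (h : G = G) (a : G.V) : vcast h a = a := rfl

@[simp] lemma vcast_vcast {G₁ G₂ G₃ : LGraph} (h : G₁ = G₂) (h' : G₂ = G₃) (a : G₁.V) :
    vcast h' (vcast h a) = vcast (h.trans h') a := by subst h h'; rfl

lemma adj_vcast {G₁ G₂ : LGraph} (h h' : G₁ = G₂) (a b : G₁.V) :
    G₂.adj (vcast h a) (vcast h' b) ↔ G₁.adj a b := by subst h; rfl

lemma label_vcast {G₁ G₂ : LGraph} (h : G₁ = G₂) (a : G₁.V) :
    G₂.label (vcast h a) = G₁.label a := by subst h; rfl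

/-- induced subgraph -/
def induce (G : LGraph) (s : Set G.V) : LGraph where
  V := {x : G.V // x ∈ s}
  adj a b := G.adj a.1 b.1
  symm h := G.symm h
  irrefl a := G.irrefl a.1
  label a := G.label a.1

lemma comp_adj_mk_same {P : LGraph} {H : P.V → LGraph} {v : P.V} {a b : (H v).V} :
    (P.comp H).adj ⟨v, a⟩ ⟨v, b⟩ ↔ (H v).adj a b := by
  constructor
  · rintro (⟨v', a', b', h1, h2, h3⟩ | ⟨hne, _⟩)
    · obtain ⟨rfl, ha⟩ := Sigma.mk.inj_iff.mp h1
      obtain ⟨-, hb⟩ := Sigma.mk.inj_iff.mp h2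
      rw [eq_of_heq ha, eq_of_heq hb]; exact h3
    · exact absurd rfl hne
  · intro h; exact Or.inl ⟨v, a, b, rfl, rfl, h⟩

lemma comp_adj_mk_ne {P : LGraph} {H : P.V → LGraph} {v w : P.V} (hvw : v ≠ w)
    {a : (H v).V} {b : (H w).V} :
    (P.comp H).adj ⟨v, a⟩ ⟨w, b⟩ ↔ P.adj v w := by
  constructor
  · rintro (⟨v', a', b', h1, h2, h3⟩ | ⟨hne, h⟩)
    · obtain ⟨rfl, -⟩ := Sigma.mk.inj_iff.mp h1
      obtain ⟨rfl, -⟩ := Sigma.mk.inj_iff.mp h2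
      exact absurd rfl hvw
    · exact h
  · intro h; exact Or.inr ⟨hvw, h⟩

def compCongr {P : LGraph} {H₁ H₂ : P.V → LGraph} (φ : ∀ v, Iso (H₁ v) (H₂ v)) :
    Iso (P.comp H₁) (P.comp H₂) where
  toEquiv := Equiv.sigmaCongrRight (fun v => (φ v).toEquiv)
  adj_iff x y := by
    rcases x with ⟨v, a⟩; rcases y with ⟨v', b⟩
    change (P.comp H₁).adj ⟨v, a⟩ ⟨v', b⟩ ↔
      (P.comp H₂).adj ⟨v, (φ v).toEquiv a⟩ ⟨v', (φ v').toEquiv b⟩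
    by_cases h : v = v'
    · subst h
      rw [comp_adj_mk_same, comp_adj_mk_same]
      exact (φ v).adj_iff a b
    · rw [comp_adj_mk_ne h, comp_adj_mk_ne h]
  label_eq x := by rcases x with ⟨v, a⟩; exact (φ v).label_eq a

section CompAt

variable (P : LGraph) (H : P.V → LGraph) (w : P.V) (X : LGraph)

/-- the context of a composition around the fibre of `w`, with `X` plugged in place of
that fibre -/
def compAt : LGraph :=
  ((P.induce {v : P.V | v ≠ w}).comp
      (fun v : {v : P.V // v ≠ w} => H v.1)).plug
    {x : Σ v : {v : P.V // v ≠ w}, (H v.1).V | P.adj x.1.1 w} X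

def compAtCongrX {X Y : LGraph} (φ : Iso X Y) :
    Iso (compAt P H w X) (compAt P H w Y) := plugCongrZ _ φ

/-- plugging into the hole of `compAt` -/
def compAtPlug (E : LGraph) (RE : Set E.V) (Z : LGraph) :
    Iso (compAt P H w (E.plug RE Z))
      ((compAt P H w E).plug
        {u : (Σ v : {v : P.V // v ≠ w}, (H v.1).V) ⊕ E.V |
          Sum.elim (fun x : Σ v : {v : P.V // v ≠ w}, (H v.1).V => P.adj x.1.1 w)
            (· ∈ RE) u} Z) :=
  plugPlug _ _ _ _ _

def catF : (Σ v : P.V, (if v = w then X else H v).V) →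
    (Σ v : {v : P.V // v ≠ w}, (H v.1).V) ⊕ X.V
  | ⟨v, a⟩ =>
    if h : v = w then .inr (vcast (by simp [h]) a)
    else .inl ⟨⟨v, h⟩, vcast (if_neg h) a⟩

def catG : (Σ v : {v : P.V // v ≠ w}, (H v.1).V) ⊕ X.V →
    Σ v : P.V, (if v = w then X else H v).V
  | .inl ⟨⟨v, h⟩, a⟩ => ⟨v, vcast (if_neg h).symm a⟩
  | .inr x => ⟨w, vcast (if_pos rfl).symm x⟩

/-- `P⟨…, X at w, …⟩ ≅ compAt P H w X` -/
def isoCompAt :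
    Iso (P.comp fun v => if v = w then X else H v) (compAt P H w X) where
  toEquiv := by
    refine ⟨catF P H w X, catG P H w X, ?_, ?_⟩
    · rintro ⟨v, a⟩
      by_cases h : v = w
      · subst h; simp [catF, catG]; rfl
      · simp [catF, catG, h]; rfl
    · rintro (⟨⟨v, h⟩, a⟩ | x)
      · have h' : v ≠ w := h
        simp [catF, catG, h']; erw [vcast_vcast]; rfl
      · simp [catF, catG]; erw [vcast_vcast]; rfl
  adj_iff x y := by
    rcases x with ⟨v, a⟩; rcases y with ⟨v', b⟩
    show _ ↔ (compAt P H w X).adj (catF P H w X ⟨v, a⟩) (catF P H w X ⟨v', b⟩)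
    by_cases h : v = w <;> by_cases h' : v' = w
    · subst h; subst h'
      rw [comp_adj_mk_same]
      simp only [catF, dif_pos rfl]
      show _ ↔ X.adj (vcast (by simp) a) (vcast (by simp) b)
      rw [adj_vcast]
    · subst h
      rw [comp_adj_mk_ne (fun hh => h' hh.symm)]
      simp only [catF, dif_pos rfl, dif_neg h']
      show P.adj v v' ↔ P.adj v' v
      exact adj_comm P v v'
    · subst h'
      rw [comp_adj_mk_ne h]
      simp only [catF, dif_pos rfl, dif_neg h]
      show P.adj v v' ↔ P.adj v v'
      rfl
    · by_cases hvv : v = v'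
      · subst hvv
        rw [comp_adj_mk_same]
        simp only [catF, dif_neg h]
        show _ ↔ ((P.induce {v : P.V | v ≠ w}).comp
          (fun v : {v : P.V // v ≠ w} => H v.1)).adj ⟨⟨v, h⟩, vcast (if_neg h) a⟩
            ⟨⟨v, h⟩, vcast (if_neg h) b⟩
        erw [comp_adj_mk_same]
        exact (adj_vcast (if_neg h) (if_neg h) a b).symm
      · rw [comp_adj_mk_ne hvv]
        simp only [catF, dif_neg h, dif_neg h']
        show _ ↔ ((P.induce {v : P.V | v ≠ w}).comp
          (fun v : {v : P.V // v ≠ w} => H v.1)).adj ⟨⟨v, h⟩, vcast (if_neg h) a⟩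
            ⟨⟨v', h'⟩, vcast (if_neg h') b⟩
        erw [comp_adj_mk_ne (fun hh => hvv (congrArg Subtype.val hh))]
        show P.adj v v' ↔ P.adj v v'
        rfl
  label_eq x := by
    rcases x with ⟨v, a⟩
    show (compAt P H w X).label (catF P H w X ⟨v, a⟩) = _
    by_cases h : v = w
    · subst h
      simp only [catF, dif_pos rfl]
      show X.label (vcast (by simp) a) = _
      rw [label_vcast]; rfl
    · simp only [catF, dif_neg h]
      show (H v).label (vcast (if_neg h) a) = _
      rw [label_vcast]; rfl

end CompAt

end LGraph
namespace LGraph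

lemma module_image {G K : LGraph} (θ : Iso G K) {N : Set G.V} (h : G.IsModule N) :
    K.IsModule (θ.toEquiv '' N) := by
  intro y hy x hx x' hx'
  obtain ⟨a, ha, rfl⟩ := hx
  obtain ⟨a', ha', rfl⟩ := hx'
  have hy' : θ.toEquiv.symm y ∉ N := fun hc => hy ⟨_, hc, θ.toEquiv.apply_symm_apply y⟩
  have e1 := θ.symm.adj_iff y (θ.toEquiv a)
  have e2 := θ.symm.adj_iff y (θ.toEquiv a')
  simp only [Iso.symm, Equiv.symm_apply_apply] at e1 e2
  rw [e1, e2]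
  exact h _ hy' a ha a' ha'

lemma module_inr_plug (C : LGraph) (R : Set C.V) (X : LGraph) :
    (C.plug R X).IsModule (Set.range Sum.inr) := by
  rintro v hv x ⟨x', rfl⟩ y ⟨y', rfl⟩
  rcases v with a | x''
  · exact Iff.rfl
  · exact absurd ⟨x'', rfl⟩ hv

lemma module_fiber (P : LGraph) (H : P.V → LGraph) (w : P.V) :
    (P.comp H).IsModule {x | x.1 = w} := by
  rintro ⟨u, a⟩ hu x hx y hy
  rcases x with ⟨wx, b⟩; rcases y with ⟨wy, c⟩
  have hwx : wx = w := hx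
  have hwy : wy = w := hy
  subst w
  subst wy
  have hu' : u ≠ wx := hu
  rw [comp_adj_mk_ne hu', comp_adj_mk_ne hu']


lemma module_inl_par (X Y : LGraph) : (X.par Y).IsModule (Set.range Sum.inl) := by
  rintro v hv x ⟨x', rfl⟩ y ⟨y', rfl⟩
  rcases v with a | b
  · exact absurd ⟨a, rfl⟩ hv
  · exact Iff.rfl

lemma prime_no_hub {P : LGraph} (hP : P.Prime) (hcard : 3 ≤ Fintype.card P.V) (v : P.V)
    (h : ∀ x y : P.V, x ≠ v → y ≠ v → (P.adj v x ↔ P.adj v y)) : False := by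
  have hmod : P.IsModule {u | u ≠ v} := by
    intro w hw x hx y hy
    have hwv : w = v := not_not.mp hw
    subst hwv
    exact h x y hx hy
  have hcard2 : 2 ≤ (Finset.univ.erase v).card := by
    rw [Finset.card_erase_of_mem (Finset.mem_univ v), Finset.card_univ]
    omega
  obtain ⟨a, ha, b, hb, hab⟩ := Finset.one_lt_card.mp (by omega : 1 < (Finset.univ.erase v).card)
  have hav : a ≠ v := Finset.ne_of_mem_erase ha
  have hbv : b ≠ v := Finset.ne_of_mem_erase hb
  rcases hP.2 _ hmod with h0 | ⟨u, hu⟩ | huniv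
  · exact absurd h0 (Set.nonempty_iff_ne_empty.mp ⟨a, hav⟩)
  · have h1 : a ∈ ({u} : Set P.V) := by rw [← hu]; exact hav
    have h2 : b ∈ ({u} : Set P.V) := by rw [← hu]; exact hbv
    exact hab ((h1 : a = u).trans (h2 : b = u).symm)
  · have : v ∈ {u | u ≠ v} := by rw [huniv]; trivial
    exact this rfl

lemma prime_exists_adj {P : LGraph} (hP : P.Prime) (hcard : 3 ≤ Fintype.card P.V)
    (v : P.V) : ∃ u, u ≠ v ∧ P.adj v u := by
  by_contra hc
  push_neg at hc
  exact prime_no_hub hP hcard v (fun x y hx hy =>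
    iff_of_false (fun ha => hc x hx ha) (fun ha => hc y hy ha))

lemma prime_exists_nonadj {P : LGraph} (hP : P.Prime) (hcard : 3 ≤ Fintype.card P.V)
    (v : P.V) : ∃ u, u ≠ v ∧ ¬ P.adj v u := by
  by_contra hc
  push_neg at hc
  exact prime_no_hub hP hcard v (fun x y hx hy =>
    iff_of_true (hc x hx) (hc y hy))

/-- The module lemma: a module of a prime composition with nonempty parts is empty,
inside a single fibre, or everything. -/
lemma prime_comp_module {P : LGraph} (hP : P.Prime) (hcard : 3 ≤ Fintype.card P.V)
    {H : P.V → LGraph} (hH : ∀ v, Nonempty (H v).V) {N : Set (P.comp H).V}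
    (hN : (P.comp H).IsModule N) :
    N = ∅ ∨ (∃ w, ∀ x ∈ N, Sigma.fst x = w) ∨ N = Set.univ := by
  by_cases hone : ∀ x ∈ N, ∀ y ∈ N, Sigma.fst x = Sigma.fst y
  · rcases Set.eq_empty_or_nonempty N with h | ⟨x₀, hx₀⟩
    · exact Or.inl h
    · exact Or.inr (Or.inl ⟨x₀.1, fun x hx => hone x hx x₀ hx₀⟩)
  · push_neg at hone
    obtain ⟨x₁, hx₁, y₁, hy₁, hne₁⟩ := hone
    set J : Set P.V := {v | ∃ x ∈ N, Sigma.fst x = v} with hJ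
    have hJmod : P.IsModule J := by
      intro q hq j hj k hk
      obtain ⟨xj, hxj, hfj⟩ := hj
      obtain ⟨xk, hxk, hfk⟩ := hk
      obtain ⟨a⟩ := hH q
      have hqa : (⟨q, a⟩ : (P.comp H).V) ∉ N := fun hc => hq ⟨⟨q, a⟩, hc, rfl⟩
      have hiff := hN ⟨q, a⟩ hqa xj hxj xk hxk
      rcases xj with ⟨j', aj⟩; rcases xk with ⟨k', ak⟩
      have hfj' : j' = j := hfj
      have hfk' : k' = k := hfk
      subst hfj'; subst hfk'
      have hqj : q ≠ j' := fun hc => hq (⟨⟨j', aj⟩, hxj, hc.symm⟩)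
      have hqk : q ≠ k' := fun hc => hq (⟨⟨k', ak⟩, hxk, hc.symm⟩)
      rwa [comp_adj_mk_ne hqj, comp_adj_mk_ne hqk] at hiff
    rcases hP.2 _ hJmod with h0 | ⟨u, hu⟩ | huniv
    · have : x₁.1 ∈ J := ⟨x₁, hx₁, rfl⟩
      rw [h0] at this
      exact absurd this (Set.notMem_empty _)
    · have h1 : x₁.1 ∈ ({u} : Set P.V) := by rw [← hu]; exact ⟨x₁, hx₁, rfl⟩
      have h2 : y₁.1 ∈ ({u} : Set P.V) := by rw [← hu]; exact ⟨y₁, hy₁, rfl⟩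
      exact absurd ((h1 : x₁.1 = u).trans (h2 : y₁.1 = u).symm) hne₁
    · right; right
      rw [Set.eq_univ_iff_forall]
      rintro ⟨j, aj⟩
      by_contra hyN
      obtain ⟨k, hkj, hadj⟩ := prime_exists_adj hP hcard j
      obtain ⟨k', hk'j, hnadj⟩ := prime_exists_nonadj hP hcard j
      have hkJ : k ∈ J := by rw [huniv]; trivial
      have hk'J : k' ∈ J := by rw [huniv]; trivial
      obtain ⟨xk, hxk, hfk⟩ := hkJ
      obtain ⟨xk', hxk', hfk'⟩ := hk'J
      have hiff := hN ⟨j, aj⟩ hyN xk hxk xk' hxk'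
      rcases xk with ⟨k₀, ak⟩; rcases xk' with ⟨k₀', ak'⟩
      have hfk2 : k₀ = k := hfk
      have hfk2' : k₀' = k' := hfk'
      subst hfk2; subst hfk2'
      rw [comp_adj_mk_ne (fun hc => hkj hc.symm),
        comp_adj_mk_ne (fun hc => hk'j hc.symm)] at hiff
      exact hnadj (hiff.mp hadj)

lemma par_adj_cases {X Y : LGraph} {p q : (X.par Y).V} (h : (X.par Y).adj p q) :
    (∃ a b, p = Sum.inl a ∧ q = Sum.inl b) ∨ (∃ a b, p = Sum.inr a ∧ q = Sum.inr b) := by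
  rcases p with a | a <;> rcases q with b | b
  · exact Or.inl ⟨a, b, rfl, rfl⟩
  · exact absurd h (fun hc => hc)
  · exact absurd h (fun hc => hc)
  · exact Or.inr ⟨a, b, rfl, rfl⟩

/-- a graph with a "join bipartition" is not isomorphic to a par of nonempty graphs -/
lemma no_join_par {c X Y : LGraph} (φ : Iso c (X.par Y)) (hX : Nonempty X.V)
    (hY : Nonempty Y.V) {SA : Set c.V} (h1 : SA.Nonempty) (h2 : SAᶜ.Nonempty)
    (hj : ∀ x ∈ SA, ∀ y ∈ SAᶜ, c.adj x y) : False := by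
  obtain ⟨u, hu⟩ := h1
  obtain ⟨v, hv⟩ := h2
  have hside : ∀ z z' : c.V, c.adj z z' → (φ.toEquiv z).isLeft = (φ.toEquiv z').isLeft := by
    intro z z' h
    rcases par_adj_cases ((φ.adj_iff z z').mp h) with ⟨a, b, h1', h2'⟩ | ⟨a, b, h1', h2'⟩ <;>
      simp [h1', h2']
  have hall : ∀ z : c.V, (φ.toEquiv z).isLeft = (φ.toEquiv v).isLeft := by
    intro z
    by_cases hz : z ∈ SA
    · exact hside z v (hj z hz v hv)
    · rw [← hside u v (hj u hu v hv)]
      exact (hside u z (hj u hu z hz)).symm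
  obtain ⟨x₀⟩ := hX
  obtain ⟨y₀⟩ := hY
  have hx := hall (φ.toEquiv.symm (Sum.inl x₀))
  have hy := hall (φ.toEquiv.symm (Sum.inr y₀))
  erw [Equiv.apply_symm_apply] at hx hy
  rw [← hy] at hx
  exact absurd hx (by simp)

/-- a tensor of nonempty graphs is not isomorphic to a par of nonempty graphs -/
lemma tensor_not_par {A B X Y : LGraph} (φ : Iso (A.tensor B) (X.par Y))
    (hA : Nonempty A.V) (hB : Nonempty B.V) (hX : Nonempty X.V) (hY : Nonempty Y.V) :
    False := by
  obtain ⟨a₀⟩ := hA; obtain ⟨b₀⟩ := hB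
  refine no_join_par φ hX hY (SA := Set.range Sum.inl) ⟨Sum.inl a₀, a₀, rfl⟩
    ⟨Sum.inr b₀, by rintro ⟨x, hx⟩; exact absurd hx (by simp)⟩ ?_
  rintro x ⟨a, rfl⟩ y hy
  rcases y with b | b
  · exact absurd ⟨b, rfl⟩ hy
  · trivial

/-- a prime composition with nonempty parts is not isomorphic to a par of
nonempty graphs -/
lemma primeComp_not_par {P : LGraph} (hP : P.Prime) (hcard : 3 ≤ Fintype.card P.V)
    {H : P.V → LGraph} (hH : ∀ v, Nonempty (H v).V) {X Y : LGraph}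
    (φ : Iso (P.comp H) (X.par Y)) (hX : Nonempty X.V) (hY : Nonempty Y.V) : False := by
  obtain ⟨x₀⟩ := hX; obtain ⟨y₀⟩ := hY
  have hmod := module_image φ.symm (module_inl_par X Y)
  rcases prime_comp_module hP hcard hH hmod with h0 | ⟨w, hw⟩ | huniv
  · have : φ.symm.toEquiv (Sum.inl x₀) ∈ φ.symm.toEquiv '' (Set.range Sum.inl) :=
      ⟨_, ⟨x₀, rfl⟩, rfl⟩
    rw [h0] at this
    exact Set.notMem_empty _ this
  · obtain ⟨k, hkw, hadj⟩ := prime_exists_adj hP hcard w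
    obtain ⟨ak⟩ := hH k
    set z : (P.comp H).V := ⟨k, ak⟩ with hz
    have hzN : z ∉ φ.symm.toEquiv '' (Set.range Sum.inl) := by
      intro hc
      exact hkw (hw z hc)
    set x₀' : (P.comp H).V := φ.symm.toEquiv (Sum.inl x₀) with hx₀'
    have hx₀N : x₀' ∈ φ.symm.toEquiv '' (Set.range Sum.inl) := ⟨_, ⟨x₀, rfl⟩, rfl⟩
    have hfst : x₀'.1 = w := hw _ hx₀N
    have hadj' : (P.comp H).adj z x₀' := by
      rcases x₀' with ⟨w', b⟩
      have : w' = w := hfst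
      subst this
      rw [comp_adj_mk_ne hkw]
      exact P.symm hadj
    have := (φ.adj_iff z x₀').mp hadj'
    have hfz : φ.toEquiv x₀' = Sum.inl x₀ := by
      rw [hx₀']
      show φ.toEquiv (φ.toEquiv.symm _) = _
      erw [Equiv.apply_symm_apply]
    rw [hfz] at this
    rcases hfz' : φ.toEquiv z with a | b
    · exact hzN ⟨Sum.inl a, ⟨a, rfl⟩, by rw [← hfz']; exact φ.toEquiv.symm_apply_apply z⟩
    · rw [hfz'] at this
      exact this
  · have : φ.symm.toEquiv (Sum.inr y₀) ∈ φ.symm.toEquiv '' (Set.range Sum.inl) := by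
      rw [huniv]; trivial
    obtain ⟨u, ⟨x, rfl⟩, hu⟩ := this
    exact absurd (φ.symm.toEquiv.injective hu) (by simp)

lemma not_cover_two_fibers {P : LGraph} (hcard : 3 ≤ Fintype.card P.V)
    {H : P.V → LGraph} (hH : ∀ v, Nonempty (H v).V) {N₁ N₂ : Set (P.comp H).V}
    {w₁ w₂ : P.V} (h₁ : ∀ x ∈ N₁, Sigma.fst x = w₁) (h₂ : ∀ x ∈ N₂, Sigma.fst x = w₂)
    (hcov : ∀ x, x ∈ N₁ ∪ N₂) : False := by
  have hcard' : 1 ≤ ((Finset.univ.erase w₁).erase w₂).card := by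
    have e1 : (Finset.univ.erase w₁).card = Fintype.card P.V - 1 := by
      rw [Finset.card_erase_of_mem (Finset.mem_univ w₁), Finset.card_univ]
    have e2 := Finset.pred_card_le_card_erase (a := w₂) (s := Finset.univ.erase w₁)
    omega
  obtain ⟨w₃, hw₃⟩ := Finset.card_pos.mp hcard'
  have hw₃2 : w₃ ≠ w₂ := Finset.ne_of_mem_erase hw₃
  have hw₃1 : w₃ ≠ w₁ := Finset.ne_of_mem_erase (Finset.mem_of_mem_erase hw₃)
  obtain ⟨a⟩ := hH w₃
  rcases hcov ⟨w₃, a⟩ with h | h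
  · exact hw₃1 (h₁ _ h)
  · exact hw₃2 (h₂ _ h)

lemma prime_dual {P : LGraph} (hP : P.Prime) : P.dual.Prime := by
  constructor
  · exact hP.1
  · intro M hM
    apply hP.2
    intro v hv x hx y hy
    have := hM v hv x hx y hy
    simp only [dual] at this
    have hvx : v ≠ x := fun hc => hv (hc ▸ hx)
    have hvy : v ≠ y := fun hc => hv (hc ▸ hy)
    constructor
    · intro h
      by_contra hc
      exact (this.mpr ⟨hvy, hc⟩).2 h
    · intro h
      by_contra hc
      exact (this.mp ⟨hvx, hc⟩).2 h

end LGraph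
namespace LGraph

lemma comp_adj_ne' {P : LGraph} {H : P.V → LGraph} {x y : (P.comp H).V}
    (h : x.1 ≠ y.1) : (P.comp H).adj x y ↔ P.adj x.1 y.1 := by
  rcases x with ⟨v, a⟩; rcases y with ⟨v', b⟩
  exact comp_adj_mk_ne h

/-- transport the second component of a sigma vertex along an equality of the base -/
def fsnd {P : LGraph} {H : P.V → LGraph} (x : Σ v, (H v).V) {w : P.V}
    (h : x.1 = w) : (H w).V := h ▸ x.2

lemma mk_fsnd {P : LGraph} {H : P.V → LGraph} (x : Σ v, (H v).V) {w : P.V}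
    (h : x.1 = w) : (⟨w, fsnd x h⟩ : Σ v, (H v).V) = x := by
  rcases x with ⟨v, a⟩
  have h' : v = w := h
  subst h'
  rfl

lemma fsnd_congr {P : LGraph} {H : P.V → LGraph} {x y : Σ v, (H v).V} {w : P.V}
    (hxy : x = y) (hx : x.1 = w) : fsnd x hx = fsnd y (hxy ▸ hx) := by subst hxy; rfl

lemma fsnd_inj {P : LGraph} {H : P.V → LGraph} {x y : Σ v, (H v).V} {w : P.V}
    (hx : x.1 = w) (hy : y.1 = w) (h : fsnd x hx = fsnd y hy) : x = y := by
  rw [← mk_fsnd x hx, ← mk_fsnd y hy, h]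

lemma comp_adj_fsnd {P : LGraph} {H : P.V → LGraph} {x y : (P.comp H).V} {w : P.V}
    (hx : x.1 = w) (hy : y.1 = w) :
    (P.comp H).adj x y ↔ (H w).adj (fsnd x hx) (fsnd y hy) := by
  rcases x with ⟨v, a⟩; rcases y with ⟨v', b⟩
  have hx' : v = w := hx
  subst w
  have hy' : v' = v := hy
  subst v'
  exact comp_adj_mk_same

lemma label_fsnd {P : LGraph} {H : P.V → LGraph} (x : (P.comp H).V) {w : P.V}
    (h : x.1 = w) : (H w).label (fsnd x h) = (P.comp H).label x := by
  rcases x with ⟨v, a⟩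
  have h' : v = w := h
  subst w
  rfl

section Outer

variable {P : LGraph} {H : P.V → LGraph} {w : P.V}

lemma comp_adj_outer (x y : (P.comp H).V) (hx : x.1 ≠ w) (hy : y.1 ≠ w) :
    ((P.induce {v : P.V | v ≠ w}).comp
        (fun v : {v : P.V // v ≠ w} => H v.1)).adj ⟨⟨x.1, hx⟩, x.2⟩ ⟨⟨y.1, hy⟩, y.2⟩ ↔
      (P.comp H).adj x y := by
  rcases x with ⟨v, a⟩; rcases y with ⟨v', b⟩
  by_cases h : v = v'
  · subst h
    erw [comp_adj_mk_same, comp_adj_mk_same]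
  · erw [comp_adj_mk_ne h,
      comp_adj_mk_ne (fun hc => h (congrArg Subtype.val hc))]
    exact Iff.rfl

lemma mko_congr {x y : Σ v, (H v).V} (hxy : x = y) (hx : x.1 ≠ w) :
    (⟨⟨x.1, hx⟩, x.2⟩ : Σ v : {v : P.V // v ≠ w}, (H v.1).V)
      = ⟨⟨y.1, hxy ▸ hx⟩, y.2⟩ := by subst hxy; rfl

lemma mko_inj {x y : Σ v, (H v).V} (hx : x.1 ≠ w) (hy : y.1 ≠ w)
    (h : (⟨⟨x.1, hx⟩, x.2⟩ : Σ v : {v : P.V // v ≠ w}, (H v.1).V)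
      = ⟨⟨y.1, hy⟩, y.2⟩) : x = y := by
  rcases x with ⟨v, a⟩; rcases y with ⟨v', b⟩
  obtain ⟨h1, h2⟩ := Sigma.mk.inj_iff.mp h
  have hv : v = v' := congrArg Subtype.val h1
  subst hv
  exact Sigma.mk.inj_iff.mpr ⟨rfl, h2⟩

end Outer

section Glue

variable {C : LGraph} {R : Set C.V} {c : LGraph} {P : LGraph} {H : P.V → LGraph} {w : P.V}
variable (χ : Iso (C.plug R c) (P.comp H))

/-- the context vertices mapped into the fibre of `w` -/
def glueS (w : P.V) : Set C.V := {a | (χ.toEquiv (Sum.inl a)).1 = w}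

def glueFun (w : P.V) (a : C.V) :
    (Σ v : {v : P.V // v ≠ w}, (H v.1).V) ⊕ (C.induce (glueS χ w)).V :=
  if h : (χ.toEquiv (Sum.inl a)).1 = w then Sum.inr ⟨a, h⟩
  else Sum.inl ⟨⟨(χ.toEquiv (Sum.inl a)).1, h⟩, (χ.toEquiv (Sum.inl a)).2⟩

lemma glueFun_bij (hfib : ∀ x : c.V, (χ.toEquiv (Sum.inr x)).1 = w) :
    Function.Bijective (glueFun χ w) := by
  constructor
  · intro a a' h
    unfold glueFun at h
    by_cases h1 : (χ.toEquiv (Sum.inl a)).1 = w <;>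
      by_cases h2 : (χ.toEquiv (Sum.inl a')).1 = w
    · rw [dif_pos h1, dif_pos h2] at h
      exact congrArg Subtype.val (Sum.inr.inj h)
    · rw [dif_pos h1, dif_neg h2] at h; exact absurd h (by simp)
    · rw [dif_neg h1, dif_pos h2] at h; exact absurd h (by simp)
    · rw [dif_neg h1, dif_neg h2] at h
      have h' := mko_inj h1 h2 (Sum.inl.inj h)
      exact Sum.inl.inj (χ.toEquiv.injective h')
  · rintro (⟨⟨v, hv⟩, b⟩ | ⟨a, ha⟩)
    · rcases hu : χ.toEquiv.symm ⟨v, b⟩ with a | x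
      · refine ⟨a, ?_⟩
        have hχa : χ.toEquiv (Sum.inl a) = ⟨v, b⟩ := by
          erw [← hu, Equiv.apply_symm_apply]
        have hne : ¬ (χ.toEquiv (Sum.inl a)).1 = w := by rw [hχa]; exact hv
        unfold glueFun
        rw [dif_neg hne]
        exact congrArg Sum.inl (mko_congr hχa hne)
      · exfalso
        have hχx : χ.toEquiv (Sum.inr x) = ⟨v, b⟩ := by
          erw [← hu, Equiv.apply_symm_apply]
        have := hfib x
        rw [hχx] at this
        exact hv this
    · have ha' : (χ.toEquiv (Sum.inl a)).1 = w := ha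
      exact ⟨a, by unfold glueFun; rw [dif_pos ha']⟩

/-- the context `C` is isomorphic to `compAt P H w (induce C S)` -/
def glueIso (hfib : ∀ x : c.V, (χ.toEquiv (Sum.inr x)).1 = w) :
    Iso C (compAt P H w (C.induce (glueS χ w))) where
  toEquiv := Equiv.ofBijective (glueFun χ w) (glueFun_bij χ hfib)
  adj_iff a a' := by
    show C.adj a a' ↔ (compAt P H w (C.induce (glueS χ w))).adj (glueFun χ w a)
      (glueFun χ w a')
    unfold glueFun
    by_cases h1 : (χ.toEquiv (Sum.inl a)).1 = w <;>
      by_cases h2 : (χ.toEquiv (Sum.inl a')).1 = w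
    · rw [dif_pos h1, dif_pos h2]
      exact Iff.rfl
    · rw [dif_pos h1, dif_neg h2]
      have := (χ.adj_iff (Sum.inl a) (Sum.inl a')).trans
        (comp_adj_ne' (by rw [h1]; exact fun hc => h2 hc.symm))
      rw [h1] at this
      exact this.trans (adj_comm P _ _)
    · rw [dif_neg h1, dif_pos h2]
      have := (χ.adj_iff (Sum.inl a) (Sum.inl a')).trans
        (comp_adj_ne' (by rw [h2]; exact h1))
      rw [h2] at this
      exact this
    · rw [dif_neg h1, dif_neg h2]
      exact (χ.adj_iff (Sum.inl a) (Sum.inl a')).trans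
        (comp_adj_outer _ _ h1 h2).symm
  label_eq a := by
    show (compAt P H w (C.induce (glueS χ w))).label (glueFun χ w a) = _
    unfold glueFun
    by_cases h1 : (χ.toEquiv (Sum.inl a)).1 = w
    · rw [dif_pos h1]
      rfl
    · rw [dif_neg h1]
      show (H (χ.toEquiv (Sum.inl a)).1).label (χ.toEquiv (Sum.inl a)).2 = C.label a
      have := χ.label_eq (Sum.inl a)
      exact this
  
lemma glue_mem (hfib : ∀ x : c.V, (χ.toEquiv (Sum.inr x)).1 = w) (x₀ : c.V) (a : C.V) :
    a ∈ R ↔ glueFun χ w a ∈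
      {u : (Σ v : {v : P.V // v ≠ w}, (H v.1).V) ⊕ (C.induce (glueS χ w)).V |
        Sum.elim (fun x : Σ v : {v : P.V // v ≠ w}, (H v.1).V => P.adj x.1.1 w)
          (fun s : (C.induce (glueS χ w)).V => s.1 ∈ R) u} := by
  unfold glueFun
  by_cases h1 : (χ.toEquiv (Sum.inl a)).1 = w
  · rw [dif_pos h1]
    exact Iff.rfl
  · rw [dif_neg h1]
    show a ∈ R ↔ P.adj (χ.toEquiv (Sum.inl a)).1 w
    have := (χ.adj_iff (Sum.inl a) (Sum.inr x₀)).trans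
      (comp_adj_ne' (by rw [hfib x₀]; exact h1))
    rw [hfib x₀] at this
    exact this

/-- the inserted part `c`, together with the context vertices mapped into the fibre of
`w`, is isomorphic to the component `H w`. -/
def fibIso (hfib : ∀ x : c.V, (χ.toEquiv (Sum.inr x)).1 = w) :
    Iso ((C.induce (glueS χ w)).plug {s : (C.induce (glueS χ w)).V | s.1 ∈ R} c)
      (H w) where
  toEquiv := by
    refine Equiv.ofBijective
      (fun u => Sum.elim
        (fun s : (C.induce (glueS χ w)).V => fsnd (χ.toEquiv (Sum.inl s.1)) s.2)
        (fun x : c.V => fsnd (χ.toEquiv (Sum.inr x)) (hfib x)) u) ⟨?_, ?_⟩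
    · rintro (s | x) (s' | x') h <;> simp only [Sum.elim_inl, Sum.elim_inr] at h
      · have h2 := Sum.inl.inj (χ.toEquiv.injective (fsnd_inj _ _ h))
        erw [Sum.inl.injEq]
        exact Subtype.ext h2
      · exact absurd (χ.toEquiv.injective (fsnd_inj _ _ h)) (by simp)
      · exact absurd (χ.toEquiv.injective (fsnd_inj _ _ h)) (by simp)
      · erw [Sum.inr.injEq]
        exact Sum.inr.inj (χ.toEquiv.injective (fsnd_inj _ _ h))
    · intro b
      rcases hu : χ.toEquiv.symm ⟨w, b⟩ with a | x
      · have hχa : χ.toEquiv (Sum.inl a) = ⟨w, b⟩ := by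
          erw [← hu, Equiv.apply_symm_apply]
        have ha : a ∈ glueS χ w := by show _ = w; rw [hχa]
        refine ⟨Sum.inl ⟨a, ha⟩, ?_⟩
        show fsnd (χ.toEquiv (Sum.inl a)) _ = b
        exact fsnd_congr hχa _
      · have hχx : χ.toEquiv (Sum.inr x) = ⟨w, b⟩ := by
          erw [← hu, Equiv.apply_symm_apply]
        refine ⟨Sum.inr x, ?_⟩
        show fsnd (χ.toEquiv (Sum.inr x)) _ = b
        exact fsnd_congr hχx _
  adj_iff u u' := by
    rcases u with s | x <;> rcases u' with s' | x'
    · exact (χ.adj_iff (Sum.inl s.1) (Sum.inl s'.1)).trans (comp_adj_fsnd _ _)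
    · exact (χ.adj_iff (Sum.inl s.1) (Sum.inr x')).trans (comp_adj_fsnd _ _)
    · exact (χ.adj_iff (Sum.inr x) (Sum.inl s'.1)).trans (comp_adj_fsnd _ _)
    · exact (χ.adj_iff (Sum.inr x) (Sum.inr x')).trans (comp_adj_fsnd _ _)
  label_eq u := by
    rcases u with s | x
    · show (H w).label (fsnd (χ.toEquiv (Sum.inl s.1)) _) = C.label s.1
      erw [label_fsnd]
      exact χ.label_eq (Sum.inl s.1)
    · show (H w).label (fsnd (χ.toEquiv (Sum.inr x)) _) = c.label x
      rw [label_fsnd]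
      exact χ.label_eq (Sum.inr x)

end Glue

/-- matching up components of isomorphic compositions whose fibres correspond -/
def fibEqIso {P Q : LGraph} {H : P.V → LGraph} {K : Q.V → LGraph}
    (χ : Iso (P.comp H) (Q.comp K)) (v : P.V) (u : Q.V)
    (h1 : ∀ x : (P.comp H).V, x.1 = v → (χ.toEquiv x).1 = u)
    (h2 : ∀ y : (Q.comp K).V, y.1 = u → (χ.toEquiv.symm y).1 = v) :
    Iso (H v) (K u) where
  toEquiv := by
    refine Equiv.ofBijective (fun a => fsnd (χ.toEquiv ⟨v, a⟩) (h1 _ rfl)) ⟨?_, ?_⟩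
    · intro a a' h
      have h3 := χ.toEquiv.injective (fsnd_inj _ _ h)
      exact eq_of_heq (Sigma.mk.inj_iff.mp h3).2
    · intro b
      have hy := h2 ⟨u, b⟩ rfl
      refine ⟨fsnd (χ.toEquiv.symm ⟨u, b⟩) hy, ?_⟩
      have hmk := mk_fsnd (χ.toEquiv.symm ⟨u, b⟩) hy
      have : χ.toEquiv ⟨v, fsnd (χ.toEquiv.symm ⟨u, b⟩) hy⟩ = ⟨u, b⟩ := by
        erw [hmk, Equiv.apply_symm_apply]
      exact fsnd_congr this _
  adj_iff a a' := by
    refine (comp_adj_mk_same (P := P) (H := H)).symm.trans ?_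
    exact (χ.adj_iff ⟨v, a⟩ ⟨v, a'⟩).trans (comp_adj_fsnd _ _)
  label_eq a := by
    show (K u).label (fsnd (χ.toEquiv ⟨v, a⟩) _) = (H v).label a
    rw [label_fsnd]
    exact χ.label_eq ⟨v, a⟩

end LGraph
namespace LGraph

def getL {α β : Type} : (s : α ⊕ β) → (∃ a, s = Sum.inl a) → α
  | .inl a, _ => a
  | .inr _, h => absurd h.choose_spec (by simp)

lemma getL_spec {α β : Type} (s : α ⊕ β) (h : ∃ a, s = Sum.inl a) :
    s = Sum.inl (getL s h) := by
  rcases s with a | b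
  · rfl
  · exact absurd h.choose_spec (by simp)

def getR {α β : Type} : (s : α ⊕ β) → (¬ ∃ a, s = Sum.inl a) → β
  | .inl a, h => absurd ⟨a, rfl⟩ h
  | .inr b, _ => b

lemma getR_spec {α β : Type} (s : α ⊕ β) (h : ¬ ∃ a, s = Sum.inl a) :
    s = Sum.inr (getR s h) := by
  rcases s with a | b
  · exact absurd ⟨a, rfl⟩ h
  · rfl

section GlueT

variable {C : LGraph} {R : Set C.V} {c : LGraph} {A B : LGraph}
variable (χ : Iso (C.plug R c) (A.tensor B))

/-- context vertices mapped to the `A` side -/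
def glueST : Set C.V := {a | ∃ b, χ.toEquiv (Sum.inl a) = Sum.inl b}

def glueFunT (a : C.V) : B.V ⊕ (C.induce (glueST χ)).V :=
  if h : ∃ b, χ.toEquiv (Sum.inl a) = Sum.inl b then Sum.inr ⟨a, h⟩
  else Sum.inl (getR (χ.toEquiv (Sum.inl a)) h)

variable (hfib : ∀ x : c.V, ∃ b, χ.toEquiv (Sum.inr x) = Sum.inl b)
lemma glueFunT_bij (hfib : ∀ x : c.V, ∃ b, χ.toEquiv (Sum.inr x) = Sum.inl b) :
    Function.Bijective (glueFunT χ) := by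
  constructor
  · intro a a' h
    unfold glueFunT at h
    by_cases h1 : ∃ b, χ.toEquiv (Sum.inl a) = Sum.inl b <;>
      by_cases h2 : ∃ b, χ.toEquiv (Sum.inl a') = Sum.inl b
    · rw [dif_pos h1, dif_pos h2] at h
      exact congrArg Subtype.val (Sum.inr.inj h)
    · rw [dif_pos h1, dif_neg h2] at h; exact absurd h (by simp)
    · rw [dif_neg h1, dif_pos h2] at h; exact absurd h (by simp)
    · rw [dif_neg h1, dif_neg h2] at h
      have := (getR_spec _ h1).trans ((congrArg Sum.inr (Sum.inl.inj h)).trans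
        (getR_spec _ h2).symm)
      exact Sum.inl.inj (χ.toEquiv.injective this)
  · rintro (b | ⟨a, ha⟩)
    · rcases hu : χ.toEquiv.symm (Sum.inr b) with a | x
      · have hχa : χ.toEquiv (Sum.inl a) = Sum.inr b := by
          erw [← hu, Equiv.apply_symm_apply]
        have hne : ¬ ∃ b', χ.toEquiv (Sum.inl a) = Sum.inl b' := by
          rw [hχa]; simp
        refine ⟨a, ?_⟩
        unfold glueFunT
        rw [dif_neg hne]
        congr 1
        exact Sum.inr.inj ((getR_spec _ hne).symm.trans hχa)
      · exfalso
        have hχx : χ.toEquiv (Sum.inr x) = Sum.inr b := by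
          erw [← hu, Equiv.apply_symm_apply]
        obtain ⟨b', hb'⟩ := hfib x
        rw [hχx] at hb'
        exact absurd hb' (by simp)
    · have ha' : ∃ b, χ.toEquiv (Sum.inl a) = Sum.inl b := ha
      exact ⟨a, by unfold glueFunT; rw [dif_pos ha']⟩

/-- the tensor-side context iso -/
def glueIsoT : Iso C (B.plug Set.univ (C.induce (glueST χ))) where
  toEquiv := Equiv.ofBijective (glueFunT χ) (glueFunT_bij χ hfib)
  adj_iff a a' := by
    show C.adj a a' ↔ (B.plug Set.univ (C.induce (glueST χ))).adj (glueFunT χ a)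
      (glueFunT χ a')
    unfold glueFunT
    by_cases h1 : ∃ b, χ.toEquiv (Sum.inl a) = Sum.inl b <;>
      by_cases h2 : ∃ b, χ.toEquiv (Sum.inl a') = Sum.inl b
    · rw [dif_pos h1, dif_pos h2]
      exact Iff.rfl
    · rw [dif_pos h1, dif_neg h2]
      refine iff_of_true ?_ trivial
      have := χ.adj_iff (Sum.inl a) (Sum.inl a')
      rw [(getL_spec _ h1 : χ.toEquiv (Sum.inl a) = _), getR_spec _ h2] at this
      exact this.mpr trivial
    · rw [dif_neg h1, dif_pos h2]
      refine iff_of_true ?_ trivial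
      have := χ.adj_iff (Sum.inl a) (Sum.inl a')
      rw [getR_spec _ h1, (getL_spec _ h2 : χ.toEquiv (Sum.inl a') = _)] at this
      exact this.mpr trivial
    · rw [dif_neg h1, dif_neg h2]
      have := χ.adj_iff (Sum.inl a) (Sum.inl a')
      rw [getR_spec _ h1, getR_spec _ h2] at this
      exact this
  label_eq a := by
    show (B.plug Set.univ (C.induce (glueST χ))).label (glueFunT χ a) = _
    unfold glueFunT
    by_cases h1 : ∃ b, χ.toEquiv (Sum.inl a) = Sum.inl b
    · rw [dif_pos h1]
      rfl
    · rw [dif_neg h1]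
      have := χ.label_eq (Sum.inl a)
      rw [getR_spec _ h1] at this
      exact this

lemma glue_memT (hfib : ∀ x : c.V, ∃ b, χ.toEquiv (Sum.inr x) = Sum.inl b)
    (x₀ : c.V) (a : C.V) :
    a ∈ R ↔ glueFunT χ a ∈
      {u : B.V ⊕ (C.induce (glueST χ)).V |
        Sum.elim (fun b : B.V => b ∈ (Set.univ : Set B.V))
          (fun s : (C.induce (glueST χ)).V => s.1 ∈ R) u} := by
  unfold glueFunT
  by_cases h1 : ∃ b, χ.toEquiv (Sum.inl a) = Sum.inl b
  · rw [dif_pos h1]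
    exact Iff.rfl
  · rw [dif_neg h1]
    refine iff_of_true ?_ trivial
    have := χ.adj_iff (Sum.inl a) (Sum.inr x₀)
    rw [getR_spec _ h1, (getL_spec _ (hfib x₀) : χ.toEquiv (Sum.inr x₀) = _)] at this
    exact this.mpr trivial

/-- the inserted part together with the `A`-side context vertices is isomorphic to `A` -/
def fibIsoT :
    Iso ((C.induce (glueST χ)).plug {s : (C.induce (glueST χ)).V | s.1 ∈ R} c) A where
  toEquiv := by
    refine Equiv.ofBijective
      (fun u => Sum.elim
        (fun s : (C.induce (glueST χ)).V => getL (χ.toEquiv (Sum.inl s.1)) s.2)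
        (fun x : c.V => getL (χ.toEquiv (Sum.inr x)) (hfib x)) u) ⟨?_, ?_⟩
    · have key : ∀ (u u' : (C.plug R c).V) (h : ∃ b, χ.toEquiv u = Sum.inl b)
          (h' : ∃ b, χ.toEquiv u' = Sum.inl b),
          getL (χ.toEquiv u) h = getL (χ.toEquiv u') h' → u = u' := by
        intro u u' h h' heq
        apply χ.toEquiv.injective
        rw [(getL_spec _ h : χ.toEquiv u = _), (getL_spec _ h' : χ.toEquiv u' = _), heq]
      rintro (s | x) (s' | x') h <;> simp only [Sum.elim_inl, Sum.elim_inr] at h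
      · have := Sum.inl.inj (key _ _ _ _ h)
        erw [Sum.inl.injEq]
        exact Subtype.ext this
      · exact absurd (key _ _ _ _ h) (by simp)
      · exact absurd (key _ _ _ _ h) (by simp)
      · erw [Sum.inr.injEq]
        exact Sum.inr.inj (key _ _ _ _ h)
    · intro b
      rcases hu : χ.toEquiv.symm (Sum.inl b) with a | x
      · have hχa : χ.toEquiv (Sum.inl a) = Sum.inl b := by
          erw [← hu, Equiv.apply_symm_apply]
        have ha : a ∈ glueST χ := ⟨b, hχa⟩
        refine ⟨Sum.inl ⟨a, ha⟩, ?_⟩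
        show getL (χ.toEquiv (Sum.inl a)) _ = b
        exact Sum.inl.inj ((getL_spec _ _).symm.trans hχa)
      · have hχx : χ.toEquiv (Sum.inr x) = Sum.inl b := by
          erw [← hu, Equiv.apply_symm_apply]
        refine ⟨Sum.inr x, ?_⟩
        show getL (χ.toEquiv (Sum.inr x)) _ = b
        exact Sum.inl.inj ((getL_spec _ _).symm.trans hχx)
  adj_iff u u' := by
    have key : ∀ (u u' : (C.plug R c).V) (h : ∃ b, χ.toEquiv u = Sum.inl b)
        (h' : ∃ b, χ.toEquiv u' = Sum.inl b),
        (C.plug R c).adj u u' ↔ A.adj (getL (χ.toEquiv u) h) (getL (χ.toEquiv u') h') := by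
      intro u u' h h'
      have := χ.adj_iff u u'
      rw [(getL_spec _ h : χ.toEquiv u = _), (getL_spec _ h' : χ.toEquiv u' = _)] at this
      exact this
    rcases u with s | x <;> rcases u' with s' | x'
    · exact key (Sum.inl s.1) (Sum.inl s'.1) s.2 s'.2
    · exact key (Sum.inl s.1) (Sum.inr x') s.2 (hfib x')
    · exact key (Sum.inr x) (Sum.inl s'.1) (hfib x) s'.2
    · exact key (Sum.inr x) (Sum.inr x') (hfib x) (hfib x')
  label_eq u := by
    have key : ∀ (u : (C.plug R c).V) (h : ∃ b, χ.toEquiv u = Sum.inl b),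
        A.label (getL (χ.toEquiv u) h) = (C.plug R c).label u := by
      intro u h
      have := χ.label_eq u
      rw [(getL_spec _ h : χ.toEquiv u = _)] at this
      exact this
    rcases u with s | x
    · exact key (Sum.inl s.1) s.2
    · exact key (Sum.inr x) (hfib x)

end GlueT

end LGraph
namespace LGraph

def tensorEmptyLeft {A B : LGraph} (hA : A.V → False) : Iso (A.tensor B) B where
  toEquiv := ⟨fun v => v.elim (fun a => (hA a).elim) id, fun b => Sum.inr b,
    fun v => by rcases v with v | v; exact (hA v).elim; rfl, fun b => rfl⟩
  adj_iff v w := by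
    rcases v with v | v; exact (hA v).elim
    rcases w with w | w; exact (hA w).elim
    erw [Equiv.coe_fn_mk]; simp [tensor, tensorAdj]
  label_eq v := by rcases v with v | v; exact (hA v).elim; rfl

end LGraph

open LGraph

def bigTensorCongr : ∀ (n : ℕ) (F F' : Fin n → LGraph),
    (∀ i, Iso (F i) (F' i)) → Iso (bigTensor n F) (bigTensor n F')
  | 0, _, _, _ => Iso.refl _
  | n+1, F, F', φ =>
    tensorCongr (φ 0) (bigTensorCongr n _ _ (fun i => φ i.succ))

section DerivMachinery

variable {Rules : LGraph → LGraph → Prop}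

lemma provable_of_iso {G H : LGraph} (h : Provable Rules G) (e : G.iso H) :
    Provable Rules H := h.tail (Or.inl e)

lemma provable_empty : Provable Rules LGraph.empty := Relation.ReflTransGen.refl

lemma step_plug {G H : LGraph} (st : Step Rules G H) (C : LGraph) (S : Set C.V) :
    Step Rules (C.plug S G) (C.plug S H) := by
  obtain ⟨C', R', p, c, hr, h1, h2⟩ := st
  obtain φ := Classical.choice h1
  obtain ψ := Classical.choice h2
  refine ⟨C.plug S C', {u | Sum.elim (· ∈ S) (· ∈ R') u}, p, c, hr,
    ⟨(plugCongrZ S φ).trans (plugPlug C S C' R' p)⟩,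
    ⟨(plugCongrZ S ψ).trans (plugPlug C S C' R' c)⟩⟩

lemma deriv_plug {X Y : LGraph} (h : Deriv Rules X Y) (C : LGraph) (S : Set C.V) :
    Deriv Rules (C.plug S X) (C.plug S Y) := by
  induction h with
  | refl => exact Relation.ReflTransGen.refl
  | tail _ h2 ih =>
    rcases h2 with hiso | st
    · obtain φ := Classical.choice hiso
      exact ih.tail (Or.inl ⟨plugCongrZ S φ⟩)
    · exact ih.tail (Or.inr (step_plug st C S))

/-- length-indexed derivations from the empty graph -/
inductive DN : ℕ → LGraph → Prop
  | zero : DN 0 LGraph.empty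
  | iso {n : ℕ} {G H : LGraph} (h : DN n G) (e : G.iso H) : DN n H
  | succ {n : ℕ} {G H : LGraph} (h : DN n G) (st : Step GSRule G H) : DN (n+1) H

lemma dn_of_provable {G : LGraph} (h : Provable GSRule G) : ∃ n, DN n G := by
  induction h with
  | refl => exact ⟨0, DN.zero⟩
  | tail _ h2 ih =>
    obtain ⟨n, hn⟩ := ih
    rcases h2 with e | st
    · exact ⟨n, hn.iso e⟩
    · exact ⟨n + 1, hn.succ st⟩

lemma provable_of_dn {n : ℕ} {G : LGraph} (h : DN n G) : Provable GSRule G := by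
  induction h with
  | zero => exact provable_empty
  | iso _ e ih => exact provable_of_iso ih e
  | succ _ st ih => exact ih.tail (Or.inr st)

lemma dn_inv {n : ℕ} {G : LGraph} (h : DN n G) :
    (n = 0 ∧ LGraph.empty.iso G) ∨
      ∃ n' H K, n = n' + 1 ∧ DN n' H ∧ Step GSRule H K ∧ K.iso G := by
  induction h with
  | zero => exact Or.inl ⟨rfl, iso_refl _⟩
  | iso _ e ih =>
    rcases ih with ⟨hn, e'⟩ | ⟨n', H, K, hn, h1, h2, e'⟩
    · exact Or.inl ⟨hn, e'.trans' e⟩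
    · exact Or.inr ⟨n', H, K, hn, h1, h2, e'.trans' e⟩
  | succ h st => exact Or.inr ⟨_, _, _, rfl, h, st, iso_refl _⟩

lemma gsrule_concl_nonempty {p c : LGraph} (h : GSRule p c) : Nonempty c.V := by
  cases h with
  | ai a => exact ⟨Sum.inl ()⟩
  | ss A B S hA hS => exact ⟨Sum.inr hA.some⟩
  | p n P e M N hP hn hM =>
    have hpos : 0 < n := by omega
    exact ⟨Sum.inl ⟨e.symm ⟨0, hpos⟩, (hM (e (e.symm ⟨0, hpos⟩))).some⟩⟩

end DerivMachinery
section Building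

/-- inserting a provable graph into an empty slot of a composition -/
lemma provable_comp_insert {P : LGraph} {H : P.V → LGraph} (w : P.V)
    (hw : H w = LGraph.empty) (hprov : Provable GSRule (P.comp H)) {Z : LGraph}
    (hZ : Provable GSRule Z) :
    Provable GSRule (P.comp fun v => if v = w then Z else H v) := by
  have i1 : Iso (P.comp H) (P.comp fun v => if v = w then LGraph.empty else H v) :=
    compCongr fun v => isoOfEq (by
      by_cases h : v = w
      · rw [if_pos h, h, hw]
      · rw [if_neg h])
  have i2 := isoCompAt P H w LGraph.empty
  set ctx := compAt P H w LGraph.empty with hctx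
  set Rset : Set ((Σ v : {v : P.V // v ≠ w}, (H v.1).V) ⊕ LGraph.empty.V) :=
    {u | Sum.elim (fun x : Σ v : {v : P.V // v ≠ w}, (H v.1).V => P.adj x.1.1 w)
      (· ∈ (∅ : Set LGraph.empty.V)) u} with hRset
  have i3 : Iso ctx (ctx.plug Rset LGraph.empty) :=
    (plugEmptyRight (C := ctx) Rset LGraph.empty (fun x => x.elim)).symm
  have d : Deriv GSRule (ctx.plug Rset LGraph.empty) (ctx.plug Rset Z) :=
    deriv_plug hZ ctx Rset
  have i4 : Iso (ctx.plug Rset Z) (compAt P H w (LGraph.empty.plug ∅ Z)) :=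
    (compAtPlug P H w LGraph.empty ∅ Z).symm
  have i5 : Iso (compAt P H w (LGraph.empty.plug ∅ Z)) (compAt P H w Z) :=
    compAtCongrX P H w (plugEmptyLeft ∅ Z (fun x => x.elim))
  have i6 := (isoCompAt P H w Z).symm
  have step1 : Provable GSRule (ctx.plug Rset LGraph.empty) :=
    ((hprov.tail (Or.inl ⟨i1⟩)).tail (Or.inl ⟨i2⟩)).tail (Or.inl ⟨i3⟩)
  have step2 : Provable GSRule (ctx.plug Rset Z) := step1.trans d
  exact ((step2.tail (Or.inl ⟨i4⟩)).tail (Or.inl ⟨i5⟩)).tail (Or.inl ⟨i6⟩)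

/-- a composition of provable graphs is provable -/
lemma provable_comp_of_all {n : ℕ} (P : LGraph) (e : P.V ≃ Fin n) (M : Fin n → LGraph)
    (h : ∀ j, Provable GSRule (M j)) :
    Provable GSRule (P.comp fun v => M (e v)) := by
  suffices Hs : ∀ s : Finset (Fin n),
      Provable GSRule (P.comp fun v => if e v ∈ s then M (e v) else LGraph.empty) by
    refine provable_of_iso (Hs Finset.univ) ⟨compCongr fun v => ?_⟩
    exact isoOfEq (if_pos (Finset.mem_univ _))
  intro s
  induction s using Finset.induction with
  | empty =>
    refine provable_of_iso provable_empty ⟨isoOfEmpty (fun x => x.elim) (fun x => ?_)⟩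
    exact (vcast (if_neg (by simp) :
      (if e x.1 ∈ (∅ : Finset (Fin n)) then M (e x.1) else LGraph.empty) = LGraph.empty)
      x.2).elim
  | @insert j s hj ih =>
    set w := e.symm j with hwdef
    have hew : e w = j := e.apply_symm_apply j
    have hw : (if e w ∈ s then M (e w) else LGraph.empty) = LGraph.empty := by
      rw [hew, if_neg hj]
    have key := provable_comp_insert w hw ih (h j)
    refine provable_of_iso key ⟨compCongr fun v => isoOfEq ?_⟩
    by_cases hv : v = w
    · rw [if_pos hv, hv, hew, if_pos (Finset.mem_insert_self j s)]
    · have hvj : e v ≠ j := fun hc => hv (by rw [← hew] at hc; exact e.injective hc)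
      rw [if_neg hv]
      by_cases hvs : e v ∈ s
      · rw [if_pos hvs, if_pos (Finset.mem_insert_of_mem hvs)]
      · rw [if_neg hvs, if_neg (fun hc => (Finset.mem_insert.mp hc).elim hvj hvs)]

/-- the backward direction of the main theorem -/
lemma insert_into_comp {n : ℕ} (P : LGraph) (e : P.V ≃ Fin n) (M : Fin n → LGraph)
    (i : Fin n)
    (h1 : Provable GSRule (P.comp fun v => Function.update M i LGraph.empty (e v)))
    (h2 : Provable GSRule (M i)) :
    Provable GSRule (P.comp fun v => M (e v)) := by
  set w := e.symm i with hwdef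
  have hew : e w = i := e.apply_symm_apply i
  have hw : Function.update M i LGraph.empty (e w) = LGraph.empty := by
    rw [hew, Function.update_self]
  have key := provable_comp_insert w hw h1 h2
  refine provable_of_iso key ⟨compCongr fun v => isoOfEq ?_⟩
  by_cases hv : v = w
  · rw [if_pos hv, hv, hew]
  · have hvi : e v ≠ i := fun hc => hv (by rw [← hew] at hc; exact e.injective hc)
    rw [if_neg hv, Function.update_of_ne hvi]

end Building
section MainAux

/-- splitting a big tensor into provable components, given the tensor part of the
induction hypothesis -/
lemma bigT_all {N : ℕ}
    (IHT : ∀ k, k ≤ N → ∀ G : LGraph, DN k G → ∀ A B : LGraph, Iso G (A.tensor B) →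
      (∃ a, a ≤ k ∧ DN a A) ∧ (∃ b, b ≤ k ∧ DN b B)) :
    ∀ (m : ℕ) (F : Fin m → LGraph) (k : ℕ), k ≤ N → ∀ G : LGraph, DN k G →
      Iso G (bigTensor m F) → ∀ i, Provable GSRule (F i) := by
  intro m
  induction m with
  | zero => exact fun F k hk G hdn iso i => absurd i.2 (by omega)
  | succ m ihm =>
    intro F k hk G hdn iso i
    have h := IHT k hk G hdn (F 0) (bigTensor m (fun i => F i.succ)) iso
    obtain ⟨⟨a, ha, hA⟩, ⟨b, hb, hB⟩⟩ := h
    rcases Fin.eq_zero_or_eq_succ i with rfl | ⟨i', rfl⟩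
    · exact provable_of_dn hA
    · exact ihm (fun i => F i.succ) b (le_trans hb hk) _ hB (Iso.refl _) i'

/-- no conclusion of a GS rule admits a join bipartition -/
lemma conclusion_no_join {p c : LGraph} (hrule : GSRule p c) {SA : Set c.V}
    (h1 : SA.Nonempty) (h2 : SAᶜ.Nonempty)
    (hj : ∀ x ∈ SA, ∀ y ∈ SAᶜ, c.adj x y) : False := by
  cases hrule with
  | ai a => exact no_join_par (Iso.refl _) ⟨()⟩ ⟨()⟩ h1 h2 hj
  | ss A B S hA hS =>
    obtain ⟨b₀, hb₀⟩ := Set.nonempty_iff_ne_empty.mpr hS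
    exact no_join_par (Iso.refl _) ⟨b₀⟩ hA h1 h2 hj
  | p m Q eQ Mq Nq hQ hm hMq =>
    by_cases hN : Nonempty (Q.comp fun v => Nq (eQ v)).V
    · refine no_join_par (Iso.refl _) ?_ hN h1 h2 hj
      exact (⟨⟨eQ.symm ⟨0, by omega⟩, (hMq _).some⟩⟩ :
        Nonempty (Q.dual.comp fun v => Mq (eQ v)).V)
    · have hcardQ : 3 ≤ Fintype.card Q.dual.V := by
        have hc : Fintype.card Q.dual.V = Fintype.card Q.V := rfl
        have := Fintype.card_congr eQ
        rw [Fintype.card_fin] at this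
        omega
    -- c is isomorphic to the dual composition
      have φpar := parEmptyRight (X := Q.dual.comp fun v => Mq (eQ v))
        (Y := Q.comp fun v => Nq (eQ v)) (fun y => hN ⟨y⟩)
      have hmod1 : LGraph.IsModule _ SA := by
        intro v hv x hx y hy
        exact iff_of_true (LGraph.symm _ (hj x hx v hv)) (LGraph.symm _ (hj y hy v hv))
      have hmod2 : LGraph.IsModule _ SAᶜ := by
        intro v hv x hx y hy
        have hv' : v ∈ SA := not_not.mp hv
        exact iff_of_true (hj v hv' x hx) (hj v hv' y hy)
      have hN1 := module_image φpar hmod1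
      have hN2 := module_image φpar hmod2
      have hMq' : ∀ v : Q.dual.V, Nonempty ((fun v => Mq (eQ v)) v).V :=
        fun v => hMq (eQ v)
      obtain ⟨u₁, hu₁⟩ := h1
      obtain ⟨u₂, hu₂⟩ := h2
      rcases prime_comp_module (prime_dual hQ) hcardQ hMq' hN1 with e0 | ⟨w₁, hw₁⟩ | euniv
      · have : φpar.toEquiv u₁ ∈ φpar.toEquiv '' SA := ⟨u₁, hu₁, rfl⟩
        rw [e0] at this
        exact Set.notMem_empty _ this
      · rcases prime_comp_module (prime_dual hQ) hcardQ hMq' hN2 with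
          e0' | ⟨w₂, hw₂⟩ | euniv'
        · have : φpar.toEquiv u₂ ∈ φpar.toEquiv '' SAᶜ := ⟨u₂, hu₂, rfl⟩
          rw [e0'] at this
          exact Set.notMem_empty _ this
        · refine not_cover_two_fibers hcardQ hMq' hw₁ hw₂ ?_
          intro z
          rcases Classical.em (φpar.toEquiv.symm z ∈ SA) with hz | hz
          · exact Or.inl ⟨_, hz, φpar.toEquiv.apply_symm_apply z⟩
          · exact Or.inr ⟨_, hz, φpar.toEquiv.apply_symm_apply z⟩
        · have : φpar.toEquiv u₁ ∈ φpar.toEquiv '' SAᶜ := by rw [euniv']; trivial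
          obtain ⟨u, hu, hequ⟩ := this
          have heq2 := φpar.toEquiv.injective hequ
          exact (heq2 ▸ hu) hu₁
      · have : φpar.toEquiv u₂ ∈ φpar.toEquiv '' SA := by rw [euniv]; trivial
        obtain ⟨u, hu, hequ⟩ := this
        have heq2 := φpar.toEquiv.injective hequ
        exact hu₂ (heq2 ▸ hu)

end MainAux
section StepT

lemma step_case_T {n' : ℕ} {G'' C c p A B : LGraph} {R : Set C.V}
    (hrule : GSRule p c)
    (χ0 : Iso G'' (C.plug R p))
    (χ : Iso (C.plug R c) (A.tensor B))
    (hL : ∀ x : c.V, ∃ b, χ.toEquiv (Sum.inr x) = Sum.inl b)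
    (x₀ : c.V)
    (ihT : ∀ A' B' : LGraph, Iso G'' (A'.tensor B') →
      (∃ a, a ≤ n' ∧ DN a A') ∧ (∃ b, b ≤ n' ∧ DN b B')) :
    (∃ a, a ≤ n' + 1 ∧ DN a A) ∧ (∃ b, b ≤ n' + 1 ∧ DN b B) := by
  set S := glueST χ with hS
  set RD : Set (C.induce S).V := {s : (C.induce S).V | s.1 ∈ R} with hRD
  set Dp := (C.induce S).plug RD p with hDp
  have iso1 : Iso G'' (Dp.tensor B) :=
    χ0.trans ((plugCongrC (glueIsoT χ hL) (fun a => glue_memT χ hL x₀ a) p).trans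
      (((plugPlug B Set.univ (C.induce S) RD p).symm).trans
        ((plugUniv B Dp).trans (tensorComm B Dp))))
  obtain ⟨⟨a, ha, hA'⟩, ⟨b, hb, hB⟩⟩ := ihT Dp B iso1
  constructor
  · refine ⟨a + 1, by omega, hA'.succ ?_⟩
    exact ⟨C.induce S, RD, p, c, hrule, ⟨Iso.refl _⟩, ⟨(fibIsoT χ hL).symm⟩⟩
  · exact ⟨b, by omega, hB⟩

end StepT
section StepP

lemma step_case_P {n' : ℕ} {G'' C c p : LGraph} {R : Set C.V}
    (hrule : GSRule p c) (x₀ : c.V)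
    (χ0 : Iso G'' (C.plug R p))
    {m : ℕ} {Pm : LGraph} (em : Pm.V ≃ Fin m) (hPm : Pm.Prime) (hm : 4 ≤ m)
    (Mm : Fin m → LGraph) (hMm : ∀ i, Nonempty (Mm i).V)
    (χ : Iso (C.plug R c) (Pm.comp fun v => Mm (em v)))
    {w : Pm.V}
    (hfib : ∀ x : c.V, (χ.toEquiv (Sum.inr x)).1 = w)
    (hdn : DN n' G'')
    (ihP : ∀ (m' : ℕ) (P' : LGraph) (e' : P'.V ≃ Fin m'), P'.Prime → 4 ≤ m' →
      ∀ M' : Fin m' → LGraph, (∀ i, Nonempty (M' i).V) →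
      Iso G'' (P'.comp fun v => M' (e' v)) →
      ∃ i, Provable GSRule (M' i) ∧
        Provable GSRule (P'.comp fun v => Function.update M' i LGraph.empty (e' v))) :
    ∃ i, Provable GSRule (Mm i) ∧
      Provable GSRule (Pm.comp fun v => Function.update Mm i LGraph.empty (em v)) := by
  set S := glueS χ w with hSdef
  set RD : Set (C.induce S).V := {s : (C.induce S).V | s.1 ∈ R} with hRD
  set Dp := (C.induce S).plug RD p with hDpdef
  set Dc := (C.induce S).plug RD c with hDcdef
  have isoDc : Iso Dc (Mm (em w)) := fibIso χ hfib
  have iso2 : Iso G'' (Pm.comp fun v => if v = w then Dp else Mm (em v)) :=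
    (χ0.trans ((plugCongrC (glueIso χ hfib) (fun a => glue_mem χ hfib x₀ a) p).trans
      (compAtPlug Pm (fun v => Mm (em v)) w (C.induce S) RD p).symm)).trans
      (isoCompAt Pm (fun v => Mm (em v)) w Dp).symm
  have stepDpDc : Step GSRule Dp Dc :=
    ⟨C.induce S, RD, p, c, hrule, ⟨Iso.refl _⟩, ⟨Iso.refl _⟩⟩
  have hvem : ∀ v : Pm.V, v ≠ w → em v ≠ em w := fun v hv hc => hv (em.injective hc)
  by_cases hDpne : Nonempty Dp.V
  · set M₁ : Fin m → LGraph := Function.update Mm (em w) Dp with hM₁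
    have hupdate : ∀ v, (if v = w then Dp else Mm (em v)) = M₁ (em v) := by
      intro v
      by_cases hv : v = w
      · rw [if_pos hv, hv, hM₁, Function.update_self]
      · rw [if_neg hv, hM₁, Function.update_of_ne (hvem v hv)]
    have iso3 : Iso G'' (Pm.comp fun v => M₁ (em v)) :=
      iso2.trans (compCongr fun v => isoOfEq (hupdate v))
    have hM₁ne : ∀ j, Nonempty (M₁ j).V := by
      intro j
      by_cases hj : j = em w
      · rw [hM₁, hj, Function.update_self]; exact hDpne
      · rw [hM₁, Function.update_of_ne hj]; exact hMm j
    obtain ⟨j, hj1, hj2⟩ := ihP m Pm em hPm hm M₁ hM₁ne iso3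
    by_cases hji : j = em w
    · rw [hji] at hj1 hj2
      refine ⟨em w, ?_, ?_⟩
      · have hprovDp : Provable GSRule Dp := by
          rwa [hM₁, Function.update_self] at hj1
        exact provable_of_iso (hprovDp.tail (Or.inr stepDpDc)) ⟨isoDc⟩
      · rwa [hM₁, Function.update_idem] at hj2
    · refine ⟨j, ?_, ?_⟩
      · rwa [hM₁, Function.update_of_ne hji] at hj1
      · set G₀ : Pm.V → LGraph := fun v => Function.update Mm j LGraph.empty (em v)
          with hG₀
        have e1 : ∀ v, Function.update M₁ j LGraph.empty (em v)
            = if v = w then Dp else G₀ v := by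
          intro v
          by_cases hv : v = w
          · rw [if_pos hv, hv, Function.update_of_ne (fun hc => hji hc.symm), hM₁,
              Function.update_self]
          · rw [if_neg hv]
            show _ = Function.update Mm j LGraph.empty (em v)
            by_cases hvj : em v = j
            · rw [hvj, Function.update_self, Function.update_self]
            · rw [Function.update_of_ne hvj, Function.update_of_ne hvj, hM₁,
                Function.update_of_ne (hvem v hv)]
        have e2 : ∀ v, Function.update Mm j LGraph.empty (em v)
            = if v = w then Mm (em w) else G₀ v := by
          intro v
          by_cases hv : v = w
          · rw [if_pos hv, hv, Function.update_of_ne (fun hc => hji hc.symm)]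
          · rw [if_neg hv]
        have isoPt : ∀ v, Iso (if v = w then Mm (em w) else G₀ v)
            (if v = w then Dc else G₀ v) := by
          intro v
          by_cases hv : v = w
          · rw [if_pos hv, if_pos hv]; exact isoDc.symm
          · rw [if_neg hv, if_neg hv]; exact Iso.refl _
        have step2 : Step GSRule (Pm.comp fun v => Function.update M₁ j LGraph.empty (em v))
            (Pm.comp fun v => Function.update Mm j LGraph.empty (em v)) := by
          refine ⟨compAt Pm G₀ w (C.induce S),
            {u : (Σ v : {v : Pm.V // v ≠ w}, (G₀ v.1).V) ⊕ (C.induce S).V |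
              Sum.elim (fun x : Σ v : {v : Pm.V // v ≠ w}, (G₀ v.1).V => Pm.adj x.1.1 w)
                (· ∈ RD) u}, p, c, hrule, ⟨?_⟩, ⟨?_⟩⟩
          · exact (compCongr fun v => isoOfEq (e1 v)).trans
              ((isoCompAt Pm G₀ w Dp).trans (compAtPlug Pm G₀ w (C.induce S) RD p))
          · exact ((compCongr fun v => isoOfEq (e2 v)).trans
              ((compCongr isoPt).trans (isoCompAt Pm G₀ w Dc))).trans
              (compAtPlug Pm G₀ w (C.induce S) RD c)
        exact hj2.tail (Or.inr step2)
  · refine ⟨em w, ?_, ?_⟩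
    · have hprovDp : Provable GSRule Dp :=
        provable_of_iso provable_empty ⟨isoOfEmpty (fun x => x.elim) (fun x => hDpne ⟨x⟩)⟩
      exact provable_of_iso (hprovDp.tail (Or.inr stepDpDc)) ⟨isoDc⟩
    · refine provable_of_iso (provable_of_dn hdn) ⟨iso2.trans (compCongr fun v => ?_)⟩
      by_cases hv : v = w
      · rw [if_pos hv, hv]
        refine isoOfEmpty (fun x => hDpne ⟨x⟩) (fun y => ?_)
        exact (vcast (show Function.update Mm (em w) LGraph.empty (em w) = LGraph.empty
          from Function.update_self _ _ _) y).elim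
      · rw [if_neg hv]
        exact isoOfEq (Function.update_of_ne (hvem v hv) _ _).symm

end StepP
namespace LGraph

lemma module_inl_tensor (X Y : LGraph) : (X.tensor Y).IsModule (Set.range Sum.inl) := by
  rintro v hv x ⟨x', rfl⟩ y ⟨y', rfl⟩
  rcases v with a | b
  · exact absurd ⟨a, rfl⟩ hv
  · exact Iff.rfl

lemma module_inr_tensor (X Y : LGraph) : (X.tensor Y).IsModule (Set.range Sum.inr) := by
  rintro v hv x hx y hy
  obtain ⟨x', rfl⟩ := hx
  obtain ⟨y', rfl⟩ := hy
  rcases v with a | b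
  · exact Iff.rfl
  · exact absurd ⟨b, rfl⟩ hv

end LGraph

section WholeCases

/-- the context-empty case for the tensor statement: contradiction -/
lemma whole_case_T {C c p A B : LGraph} {R : Set C.V} (hrule : GSRule p c)
    (hC : C.V → False) (χ : Iso (C.plug R c) (A.tensor B))
    (hA : Nonempty A.V) (hB : Nonempty B.V) : False := by
  have χc : Iso c (A.tensor B) := (plugEmptyLeft R c hC).symm.trans χ
  cases hrule with
  | ai a => exact tensor_not_par χc.symm hA hB ⟨()⟩ ⟨()⟩
  | ss A₀ B₀ S₀ hA₀ hS₀ =>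
    obtain ⟨b₀, hb₀⟩ := Set.nonempty_iff_ne_empty.mpr hS₀
    exact tensor_not_par χc.symm hA hB ⟨b₀⟩ hA₀
  | p m' Q eQ Mq Nq hQ hm' hMq =>
    by_cases hN : Nonempty (Q.comp fun v => Nq (eQ v)).V
    · refine tensor_not_par χc.symm hA hB ?_ hN
      exact (⟨⟨eQ.symm ⟨0, by omega⟩, (hMq _).some⟩⟩ :
        Nonempty (Q.dual.comp fun v => Mq (eQ v)).V)
    · have hcardQ : 3 ≤ Fintype.card Q.dual.V := by
        have hc : Fintype.card Q.dual.V = Fintype.card Q.V := rfl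
        have := Fintype.card_congr eQ
        rw [Fintype.card_fin] at this
        omega
      have χ2 : Iso (Q.dual.comp fun v => Mq (eQ v)) (A.tensor B) :=
        (parEmptyRight (fun y => hN ⟨y⟩)).symm.trans χc
      have hMq' : ∀ v : Q.dual.V, Nonempty ((fun v => Mq (eQ v)) v).V :=
        fun v => hMq (eQ v)
      have hN1 := module_image χ2.symm (module_inl_tensor A B)
      have hN2 := module_image χ2.symm (module_inr_tensor A B)
      obtain ⟨a₀⟩ := hA
      obtain ⟨b₀⟩ := hB
      have ha₀ : χ2.symm.toEquiv (Sum.inl a₀) ∈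
          χ2.symm.toEquiv '' (Set.range Sum.inl) := ⟨_, ⟨a₀, rfl⟩, rfl⟩
      have hb₀ : χ2.symm.toEquiv (Sum.inr b₀) ∈
          χ2.symm.toEquiv '' (Set.range Sum.inr) := ⟨_, ⟨b₀, rfl⟩, rfl⟩
      have hunivN1 : ¬ (χ2.symm.toEquiv '' (Set.range Sum.inl) = Set.univ) := by
        intro hu
        have : χ2.symm.toEquiv (Sum.inr b₀) ∈ χ2.symm.toEquiv '' (Set.range Sum.inl) :=
          by rw [hu]; trivial
        obtain ⟨z, ⟨a, rfl⟩, hz⟩ := this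
        exact absurd (χ2.symm.toEquiv.injective hz) (by simp)
      have hunivN2 : ¬ (χ2.symm.toEquiv '' (Set.range Sum.inr) = Set.univ) := by
        intro hu
        have : χ2.symm.toEquiv (Sum.inl a₀) ∈ χ2.symm.toEquiv '' (Set.range Sum.inr) :=
          by rw [hu]; trivial
        obtain ⟨z, ⟨a, rfl⟩, hz⟩ := this
        exact absurd (χ2.symm.toEquiv.injective hz) (by simp)
      rcases prime_comp_module (prime_dual hQ) hcardQ hMq' hN1 with e1 | ⟨w₁, hw₁⟩ | e1
      · rw [e1] at ha₀; exact Set.notMem_empty _ ha₀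
      · rcases prime_comp_module (prime_dual hQ) hcardQ hMq' hN2 with
          e2 | ⟨w₂, hw₂⟩ | e2
        · rw [e2] at hb₀; exact Set.notMem_empty _ hb₀
        · refine not_cover_two_fibers hcardQ hMq' hw₁ hw₂ ?_
          intro z
          rcases hz : χ2.toEquiv z with a | b
          · refine Or.inl ⟨Sum.inl a, ⟨a, rfl⟩, ?_⟩
            rw [← hz]
            exact χ2.toEquiv.symm_apply_apply z
          · refine Or.inr ⟨Sum.inr b, ⟨b, rfl⟩, ?_⟩
            rw [← hz]
            exact χ2.toEquiv.symm_apply_apply z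
        · exact hunivN2 e2
      · exact hunivN1 e1

/-- matching up components of two isomorphic prime compositions -/
lemma comp_match {P Q : LGraph} {m m' : ℕ} (eP : P.V ≃ Fin m) (eQ : Q.V ≃ Fin m')
    (hP : P.Prime) (hQ : Q.Prime) (hcP : 3 ≤ Fintype.card P.V)
    (hcQ : 3 ≤ Fintype.card Q.V)
    {MP : Fin m → LGraph} {MQ : Fin m' → LGraph}
    (hMP : ∀ i, Nonempty (MP i).V) (hMQ : ∀ i, Nonempty (MQ i).V)
    (χ : Iso (Q.comp fun u => MQ (eQ u)) (P.comp fun v => MP (eP v))) :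
    ∀ v : P.V, ∃ u : Q.V, Nonempty (Iso (MQ (eQ u)) (MP (eP v))) := by
  intro v
  have hMP' : ∀ v : P.V, Nonempty ((fun v => MP (eP v)) v).V := fun v => hMP (eP v)
  have hMQ' : ∀ u : Q.V, Nonempty ((fun u => MQ (eQ u)) u).V := fun u => hMQ (eQ u)
  have hN1 := module_image χ.symm (module_fiber P (fun v => MP (eP v)) v)
  have hne2 : 1 < Fintype.card P.V := by omega
  rcases prime_comp_module hQ hcQ hMQ' hN1 with e1 | ⟨u, hu⟩ | e1
  · exfalso
    have : χ.symm.toEquiv ⟨v, (hMP (eP v)).some⟩ ∈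
        χ.symm.toEquiv '' {x | Sigma.fst x = v} := ⟨_, rfl, rfl⟩
    rw [e1] at this
    exact Set.notMem_empty _ this
  · -- the other direction
    have hvu : ∀ x : (P.comp fun v => MP (eP v)).V, x.1 = v →
        (χ.symm.toEquiv x).1 = u := fun x hx => hu _ ⟨x, hx, rfl⟩
    have hN2 := module_image χ (module_fiber Q (fun u => MQ (eQ u)) u)
    rcases prime_comp_module hP hcP hMP' hN2 with e2 | ⟨v₂, hv₂⟩ | e2
    · exfalso
      have : χ.toEquiv ⟨u, (hMQ (eQ u)).some⟩ ∈
          χ.toEquiv '' {x | Sigma.fst x = u} := ⟨_, rfl, rfl⟩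
      rw [e2] at this
      exact Set.notMem_empty _ this
    · have hv₂v : v₂ = v := by
        set x : (P.comp fun v => MP (eP v)).V := ⟨v, (hMP (eP v)).some⟩ with hx
        have h1 : (χ.symm.toEquiv x).1 = u := hvu x rfl
        have h2 : χ.toEquiv (χ.symm.toEquiv x) ∈ χ.toEquiv '' {y | Sigma.fst y = u} :=
          ⟨_, h1, rfl⟩
        have h3 := hv₂ _ h2
        rw [show χ.toEquiv (χ.symm.toEquiv x) = x from χ.toEquiv.apply_symm_apply x]
          at h3
        exact h3.symm ▸ rfl
      subst hv₂v
      have h1' : ∀ y : (Q.comp fun u => MQ (eQ u)).V, y.1 = u →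
          (χ.toEquiv y).1 = v₂ := fun y hy => hv₂ _ ⟨y, hy, rfl⟩
      exact ⟨u, ⟨fibEqIso χ u v₂ h1' hvu⟩⟩
    · exfalso
      have hne2Q : 1 < Fintype.card Q.V := by omega
      obtain ⟨u', hu'⟩ := Fintype.exists_ne_of_one_lt_card hne2Q u
      have : χ.toEquiv ⟨u', (hMQ (eQ u')).some⟩ ∈
          χ.toEquiv '' {x | Sigma.fst x = u} := by rw [e2]; trivial
      obtain ⟨x, hx, heq⟩ := this
      have hxx := χ.toEquiv.injective heq
      rw [hxx] at hx
      exact hu' hx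
  · exfalso
    obtain ⟨v', hv'⟩ := Fintype.exists_ne_of_one_lt_card hne2 v
    have : χ.symm.toEquiv ⟨v', (hMP (eP v')).some⟩ ∈
        χ.symm.toEquiv '' {x | Sigma.fst x = v} := by rw [e1]; trivial
    obtain ⟨x, hx, heq⟩ := this
    have hxx := χ.symm.toEquiv.injective heq
    rw [hxx] at hx
    exact hv' hx

end WholeCases
section WholeP

lemma whole_case_P {n' : ℕ} {G'' C c p : LGraph} {R : Set C.V}
    (hrule : GSRule p c) (hC : C.V → False)
    (χ0 : Iso G'' (C.plug R p))
    {m : ℕ} {Pm : LGraph} (em : Pm.V ≃ Fin m) (hPm : Pm.Prime) (hm : 4 ≤ m)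
    (Mm : Fin m → LGraph) (hMm : ∀ i, Nonempty (Mm i).V)
    (χ : Iso (C.plug R c) (Pm.comp fun v => Mm (em v)))
    (hdn : DN n' G'')
    (IHT : ∀ k, k ≤ n' → ∀ G : LGraph, DN k G → ∀ A B : LGraph, Iso G (A.tensor B) →
      (∃ a, a ≤ k ∧ DN a A) ∧ (∃ b, b ≤ k ∧ DN b B)) :
    ∃ i, Provable GSRule (Mm i) ∧
      Provable GSRule (Pm.comp fun v => Function.update Mm i LGraph.empty (em v)) := by
  have hcard : 3 ≤ Fintype.card Pm.V := by
    have := Fintype.card_congr em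
    rw [Fintype.card_fin] at this
    omega
  have hMm' : ∀ v : Pm.V, Nonempty ((fun v => Mm (em v)) v).V := fun v => hMm (em v)
  have χc : Iso c (Pm.comp fun v => Mm (em v)) := (plugEmptyLeft R c hC).symm.trans χ
  cases hrule with
  | ai a => exact absurd (primeComp_not_par hPm hcard hMm' χc.symm ⟨()⟩ ⟨()⟩) id
  | ss A₀ B₀ S₀ hA₀ hS₀ =>
    obtain ⟨b₀, hb₀⟩ := Set.nonempty_iff_ne_empty.mpr hS₀
    exact absurd (primeComp_not_par hPm hcard hMm' χc.symm ⟨b₀⟩ hA₀) id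
  | p m' Q eQ Mq Nq hQ hm' hMq =>
    by_cases hN : Nonempty (Q.comp fun v => Nq (eQ v)).V
    · refine absurd (primeComp_not_par hPm hcard hMm' χc.symm ?_ hN) id
      exact (⟨⟨eQ.symm ⟨0, by omega⟩, (hMq _).some⟩⟩ :
        Nonempty (Q.dual.comp fun v => Mq (eQ v)).V)
    · have hcardQ : 3 ≤ Fintype.card Q.dual.V := by
        have hc : Fintype.card Q.dual.V = Fintype.card Q.V := rfl
        have := Fintype.card_congr eQ
        rw [Fintype.card_fin] at this
        omega
      have χQ : Iso (Q.dual.comp fun v => Mq (eQ v)) (Pm.comp fun v => Mm (em v)) :=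
        (parEmptyRight (fun y => hN ⟨y⟩)).symm.trans χc
      have hmatch := comp_match (Q := Q.dual) em eQ hPm (prime_dual hQ)
        hcard hcardQ hMm hMq χQ
      -- all the Mq's are provable
      have hNqEmpty : ∀ i : Fin m', (Nq i).V → False := by
        intro i b
        refine hN ⟨⟨eQ.symm i, vcast (congrArg Nq (eQ.apply_symm_apply i)).symm b⟩⟩
      have iso4 : Iso G'' (bigTensor m' Mq) :=
        (χ0.trans (plugEmptyLeft R (bigTensor m' fun i => (Mq i).par (Nq i)) hC)).trans
          (bigTensorCongr m' _ _ (fun i => parEmptyRight (hNqEmpty i)))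
      have hbig := bigT_all IHT m' Mq n' le_rfl G'' hdn iso4
      have hallP : ∀ i : Fin m, Provable GSRule (Mm i) := by
        intro i
        obtain ⟨u, ⟨ψ⟩⟩ := hmatch (em.symm i)
        have := provable_of_iso (hbig (eQ u)) ⟨ψ⟩
        rwa [Equiv.apply_symm_apply] at this
      have hm0 : 0 < m := by omega
      refine ⟨⟨0, hm0⟩, hallP _, provable_comp_of_all Pm em _ (fun j => ?_)⟩
      by_cases hj : j = ⟨0, hm0⟩
      · rw [hj, Function.update_self]; exact provable_empty
      · rw [Function.update_of_ne hj]; exact hallP j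

end WholeP
section MainLemma

lemma main_lemma : ∀ n : ℕ, ∀ G : LGraph, DN n G →
    (∀ A B : LGraph, Iso G (A.tensor B) →
      (∃ a, a ≤ n ∧ DN a A) ∧ (∃ b, b ≤ n ∧ DN b B)) ∧
    (∀ (m : ℕ) (Pm : LGraph) (em : Pm.V ≃ Fin m), Pm.Prime → 4 ≤ m →
      ∀ Mm : Fin m → LGraph, (∀ i, Nonempty (Mm i).V) →
      Iso G (Pm.comp fun v => Mm (em v)) →
      ∃ i, Provable GSRule (Mm i) ∧
        Provable GSRule (Pm.comp fun v => Function.update Mm i LGraph.empty (em v))) := by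
  intro n
  induction n using Nat.strong_induction_on with
  | _ n IH =>
  intro G hdn
  rcases dn_inv hdn with ⟨rfl, hiso⟩ | ⟨n', G'', K, rfl, hdn'', hstep, hKG⟩
  · constructor
    · intro A B φ
      have hGe : G.V → False := fun g => ((Classical.choice hiso).toEquiv.symm g).elim
      have hA : A.V → False := fun a => hGe (φ.toEquiv.symm (Sum.inl a))
      have hB : B.V → False := fun b => hGe (φ.toEquiv.symm (Sum.inr b))
      exact ⟨⟨0, le_rfl, DN.zero.iso ⟨isoOfEmpty (fun x => x.elim) hA⟩⟩,
        ⟨0, le_rfl, DN.zero.iso ⟨isoOfEmpty (fun x => x.elim) hB⟩⟩⟩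
    · intro m Pm em hPm hm Mm hMm φ
      exfalso
      have hGe : G.V → False := fun g => ((Classical.choice hiso).toEquiv.symm g).elim
      exact hGe (φ.toEquiv.symm ⟨em.symm ⟨0, by omega⟩, (hMm _).some⟩)
  · obtain ⟨C, R, p, c, hrule, h1, h2⟩ := hstep
    have χ0 : Iso G'' (C.plug R p) := Classical.choice h1
    have ψK : Iso K (C.plug R c) := Classical.choice h2
    have x₀ : c.V := (gsrule_concl_nonempty hrule).some
    have φG : Iso (C.plug R c) G := ψK.symm.trans (Classical.choice hKG)
    have ihT : ∀ A' B' : LGraph, Iso G'' (A'.tensor B') →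
        (∃ a, a ≤ n' ∧ DN a A') ∧ (∃ b, b ≤ n' ∧ DN b B') :=
      fun A' B' ψ => (IH n' (by omega) G'' hdn'').1 A' B' ψ
    have IHT : ∀ k, k ≤ n' → ∀ G0 : LGraph, DN k G0 → ∀ A B : LGraph,
        Iso G0 (A.tensor B) → (∃ a, a ≤ k ∧ DN a A) ∧ (∃ b, b ≤ k ∧ DN b B) :=
      fun k hk G0 h0 => (IH k (by omega) G0 h0).1
    constructor
    · intro A B φ
      by_cases hA : Nonempty A.V
      · by_cases hB : Nonempty B.V
        · have χ : Iso (C.plug R c) (A.tensor B) := φG.trans φ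
          by_cases hCne : Nonempty C.V
          · by_cases hL : ∀ x : c.V, ∃ b, χ.toEquiv (Sum.inr x) = Sum.inl b
            · exact step_case_T hrule χ0 χ hL x₀ ihT
            · by_cases hRt : ∀ x : c.V, ∃ b, χ.toEquiv (Sum.inr x) = Sum.inr b
              · have hL' : ∀ x : c.V, ∃ b,
                    (χ.trans (tensorComm A B)).toEquiv (Sum.inr x) = Sum.inl b := by
                  intro x
                  obtain ⟨b, hb⟩ := hRt x
                  refine ⟨b, ?_⟩
                  show (Equiv.sumComm A.V B.V) (χ.toEquiv (Sum.inr x)) = _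
                  rw [hb]
                  rfl
                have hh := step_case_T hrule χ0 (χ.trans (tensorComm A B)) hL' x₀ ihT
                exact ⟨hh.2, hh.1⟩
              · exfalso
                have hSA : ∀ x : c.V, (∃ a, χ.toEquiv (Sum.inr x) = Sum.inl a) ∨
                    (∃ b, χ.toEquiv (Sum.inr x) = Sum.inr b) := by
                  intro x
                  rcases hx : χ.toEquiv (Sum.inr x) with a | b
                  · exact Or.inl ⟨a, rfl⟩
                  · exact Or.inr ⟨b, rfl⟩
                obtain ⟨x1, hx1⟩ := not_forall.mp hL
                obtain ⟨x2, hx2⟩ := not_forall.mp hRt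
                have hx1' : ∃ b, χ.toEquiv (Sum.inr x1) = Sum.inr b := by
                  rcases hSA x1 with h | h
                  · exact absurd h hx1
                  · exact h
                have hx2' : ∃ a, χ.toEquiv (Sum.inr x2) = Sum.inl a := by
                  rcases hSA x2 with h | h
                  · exact h
                  · exact absurd h hx2
                refine conclusion_no_join hrule
                  (SA := {x : c.V | ∃ a, χ.toEquiv (Sum.inr x) = Sum.inl a})
                  ⟨x2, hx2'⟩ ⟨x1, ?_⟩ ?_
                · intro hc
                  obtain ⟨a, ha⟩ := hc
                  obtain ⟨b, hb⟩ := hx1'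
                  rw [ha] at hb
                  exact absurd hb (by simp)
                · intro x hx y hy
                  obtain ⟨a, ha⟩ := hx
                  have hyb : ∃ b, χ.toEquiv (Sum.inr y) = Sum.inr b := by
                    rcases hSA y with h | h
                    · exact absurd h hy
                    · exact h
                  obtain ⟨b, hb⟩ := hyb
                  have hadj := χ.adj_iff (Sum.inr x) (Sum.inr y)
                  rw [ha, hb] at hadj
                  exact hadj.mpr trivial
          · exact absurd (whole_case_T hrule (fun z => hCne ⟨z⟩) χ hA hB) id
        · have hBe : B.V → False := fun b => hB ⟨b⟩
          refine ⟨⟨n' + 1, le_rfl, hdn.iso ⟨φ.trans ((tensorComm A B).trans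
            (tensorEmptyLeft hBe))⟩⟩,
            ⟨0, by omega, DN.zero.iso ⟨isoOfEmpty (fun x => x.elim) hBe⟩⟩⟩
      · have hAe : A.V → False := fun a => hA ⟨a⟩
        exact ⟨⟨0, by omega, DN.zero.iso ⟨isoOfEmpty (fun x => x.elim) hAe⟩⟩,
          ⟨n' + 1, le_rfl, hdn.iso ⟨φ.trans (tensorEmptyLeft hAe)⟩⟩⟩
    · intro m Pm em hPm hm Mm hMm φ
      have χ : Iso (C.plug R c) (Pm.comp fun v => Mm (em v)) := φG.trans φ
      by_cases hCne : Nonempty C.V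
      · have hcard : 3 ≤ Fintype.card Pm.V := by
          have := Fintype.card_congr em
          rw [Fintype.card_fin] at this
          omega
        have hmod := module_image χ (module_inr_plug C R c)
        rcases prime_comp_module hPm hcard (fun v => hMm (em v)) hmod with
          e0 | ⟨w, hw⟩ | euniv
        · exfalso
          have : χ.toEquiv (Sum.inr x₀) ∈ χ.toEquiv '' (Set.range Sum.inr) :=
            ⟨Sum.inr x₀, ⟨x₀, rfl⟩, rfl⟩
          rw [e0] at this
          exact Set.notMem_empty _ this
        · have hfib : ∀ x : c.V, (χ.toEquiv (Sum.inr x)).1 = w :=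
            fun x => hw _ ⟨Sum.inr x, ⟨x, rfl⟩, rfl⟩
          exact step_case_P hrule x₀ χ0 em hPm hm Mm hMm χ hfib hdn''
            (fun m' P' e' ha hb M' hc ψ =>
              (IH n' (by omega) G'' hdn'').2 m' P' e' ha hb M' hc ψ)
        · exfalso
          obtain ⟨a⟩ := hCne
          have : χ.toEquiv (Sum.inl a) ∈ χ.toEquiv '' (Set.range Sum.inr) := by
            rw [euniv]; trivial
          obtain ⟨u, ⟨x, rfl⟩, heq⟩ := this
          exact absurd (χ.toEquiv.injective heq) (by simp)
      · exact whole_case_P hrule (fun z => hCne ⟨z⟩) χ0 em hPm hm Mm hMm χ hdn'' IHT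

end MainLemma
end Aux
/-- Let `P` be a prime graph with `n = |V(P)| ≥ 4` and let
`M₁, …, Mₙ` be non-empty graphs. Then `P⟨M₁, …, Mₙ⟩` is provable in GS iff there is
some `i` such that `Mᵢ` is provable in GS and `P⟨M₁, …, M_{i-1}, ∅, M_{i+1}, …, Mₙ⟩`
is provable in GS. -/
theorem prime_composition_provable_iff (n : ℕ) (P : LGraph) (e : P.V ≃ Fin n)
    (hP : P.Prime) (hn : 4 ≤ n) (M : Fin n → LGraph) (hM : ∀ i, Nonempty (M i).V) :
    Provable GSRule (P.comp fun v => M (e v)) ↔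
      ∃ i : Fin n, Provable GSRule (M i) ∧
        Provable GSRule (P.comp fun v => Function.update M i LGraph.empty (e v)) := by
  constructor
  · intro hprov
    obtain ⟨k, hk⟩ := dn_of_provable hprov
    exact (main_lemma k _ hk).2 n P e hP hn M hM (Iso.refl _)
  · rintro ⟨i, h1, h2⟩
    exact insert_into_comp P e M i h2 h1
end GSP
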